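/- arXiv:1801.07149 — 2 statements merged into one kernel-verified Lean document; each statement's English description precedes it below -/
import Mathlib

section
/- For every definable S ⊆ M, the set S^{no} = {x ∈ M : there exists ε > 0 in M such that (x−ε, x+ε) ∩ S is a near-interval} is definable; consequently the near-interior S ∩ S^{no} and the near-frontier S ∖ S^{no} are definable. -/
set_option linter.unusedSectionVars false
set_option maxHeartbeats 1000000

open FirstOrder Language Set

/-- Functions of the language of ordered `F`-vector spaces with a predicate:
`+`, `-`, `0`, `1`, and scalar multiplication by each element of `F`. -/
inductive LPFunc (F : Type) : ℕ → Type
  | add : LPFunc F 2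
  | neg : LPFunc F 1
  | zero : LPFunc F 0
  | one : LPFunc F 0
  | smul : F → LPFunc F 1

/-- Relations: the order `<` and the unary predicate `Q`. -/
inductive LPRel : ℕ → Type
  | lt : LPRel 2
  | q : LPRel 1

/-- The language `L_P`. -/
def LP (F : Type) : Language := ⟨LPFunc F, LPRel⟩

attribute [reducible] LP

variable (F M : Type) [Field F] [LinearOrder F] [IsStrictOrderedRing F]
  [AddCommGroup M] [LinearOrder M] [IsOrderedAddMonoid M] [Module F M]

/-- The natural `L_P`-structure on an ordered `F`-vector space `M` with
distinguished element `one` and predicate `Q`. -/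
def LPStruc (one : M) (Q : Set M) : (LP F).Structure M where
  funMap := fun {n} f x =>
    match n, f with
    | _, LPFunc.add => x 0 + x 1
    | _, LPFunc.neg => -(x 0)
    | _, LPFunc.zero => 0
    | _, LPFunc.one => one
    | _, LPFunc.smul c => c • x 0
  RelMap := fun {n} r x =>
    match n, r with
    | _, LPRel.lt => x 0 < x 1
    | _, LPRel.q => x 0 ∈ Q

/-- A subset of `N^n` is definable (with parameters from `N`). -/
def DefinableIn (L : Language) (N : Type) [L.Structure N] {n : ℕ} (S : Set (Fin n → N)) : Prop :=
  Set.Definable (Set.univ : Set N) L S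

/-- A subset of `N` is definable (with parameters from `N`). -/
def Definable1In (L : Language) (N : Type) [L.Structure N] (S : Set N) : Prop :=
  DefinableIn L N {x : Fin 1 → N | x 0 ∈ S}

/-- A function `N^n → N` is definable if its graph is definable. -/
def DefinableFunIn (L : Language) (N : Type) [L.Structure N] {n : ℕ}
    (f : (Fin n → N) → N) : Prop :=
  DefinableIn L N {x : Fin (n + 1) → N | x (Fin.last n) = f (fun i => x (Fin.castSucc i))}

/-- `S ⊆ N` is `P`-small: covered by the image of `Pⁿ` under a definable function. -/
def SmallIn (L : Language) (N : Type) [L.Structure N] (P : Set N) (S : Set N) : Prop :=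
  ∃ (n : ℕ) (f : (Fin n → N) → N), DefinableFunIn L N f ∧
    S ⊆ f '' {x : Fin n → N | ∀ i, x i ∈ P}

/-- Definability in the pair of ordered vector spaces. -/
def POVSDefinable (one : M) (Q : Set M) {n : ℕ} (S : Set (Fin n → M)) : Prop :=
  letI := LPStruc F M one Q
  DefinableIn (LP F) M S

/-- Definability of a unary set in the pair of ordered vector spaces. -/
def POVSDefinable1 (one : M) (Q : Set M) (S : Set M) : Prop :=
  letI := LPStruc F M one Q
  Definable1In (LP F) M S

/-- Smallness in the pair of ordered vector spaces. -/
def POVSSmall (one : M) (Q : Set M) (S : Set M) : Prop :=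
  letI := LPStruc F M one Q
  SmallIn (LP F) M Q S

/-- The embedding of `M` into `M ∪ {-∞, +∞}`. -/
def toExt (x : M) : WithBot (WithTop M) := ((x : WithTop M) : WithBot (WithTop M))

/-- The open interval `(a,b)` with endpoints from `M ∪ {-∞, +∞}`, as a subset of `M`. -/
def extIoo (a b : WithBot (WithTop M)) : Set M := {x : M | a < toExt M x ∧ toExt M x < b}

/-- The union of the cosets `c + Q` for `c ∈ C`. -/
def cosetUnion (Q : Set M) (C : Finset M) : Set M := ⋃ c ∈ C, {x : M | x - c ∈ Q}

/-- A near-interval: a nonempty set of the form `(a,b) ∩ C` or `(a,b) \ C`, where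
`a < b` in `M ∪ {-∞,+∞}` and `C` is a finite union of cosets of `Q`. -/
def NearInterval (Q : Set M) (S : Set M) : Prop :=
  S.Nonempty ∧ ∃ (a b : WithBot (WithTop M)) (C : Finset M), a < b ∧
    (S = extIoo M a b ∩ cosetUnion M Q C ∨ S = extIoo M a b \ cosetUnion M Q C)
/-- The set `S^{no}` of points around which `S` looks like a near-interval. -/
def nearOpenPart (Q S : Set M) : Set M :=
  {x : M | ∃ ε : M, 0 < ε ∧ NearInterval M Q (Set.Ioo (x - ε) (x + ε) ∩ S)}


namespace NOP

variable {F M : Type} [Field F] [LinearOrder F] [IsStrictOrderedRing F]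
  [AddCommGroup M] [LinearOrder M] [IsOrderedAddMonoid M] [Module F M]

/-- Bundle of the ambient hypotheses. -/
structure Ctx (F M : Type) [Field F] [LinearOrder F] [IsStrictOrderedRing F]
    [AddCommGroup M] [LinearOrder M] [IsOrderedAddMonoid M] [Module F M]
    (Q : Submodule F M) where
  one : M
  hone : 0 < one
  hQproper : (Q : Set M) ≠ Set.univ
  hQdense : ∀ a b : M, a < b → ∃ q ∈ Q, a < q ∧ q < b
  hsmul : ∀ (c : F) (x : M), 0 < c → 0 < x → 0 < c • x

variable {Q : Submodule F M}

namespace Ctx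

variable (C : Ctx F M Q)
include C

lemma smul_lt_smul {c : F} {x y : M} (hc : 0 < c) (h : x < y) : c • x < c • y := by
  have h2 := C.hsmul c (y - x) hc (sub_pos.2 h)
  rw [smul_sub] at h2
  exact sub_pos.1 h2

lemma smul_lt_smul_iff {c : F} {x y : M} (hc : 0 < c) : c • x < c • y ↔ x < y := by
  refine ⟨fun h => ?_, C.smul_lt_smul hc⟩
  rcases lt_trichotomy x y with h1 | rfl | h1
  · exact h1
  · exact absurd h (lt_irrefl _)
  · exact absurd (C.smul_lt_smul hc h1) (not_lt.2 h.le)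

lemma smul_lt_iff {c : F} (hc : 0 < c) {x m : M} : c • x < m ↔ x < c⁻¹ • m := by
  conv_lhs => rw [← smul_inv_smul₀ (ne_of_gt hc) m]
  exact C.smul_lt_smul_iff hc

lemma lt_smul_iff {c : F} (hc : 0 < c) {x m : M} : m < c • x ↔ c⁻¹ • m < x := by
  conv_lhs => rw [← smul_inv_smul₀ (ne_of_gt hc) m]
  exact C.smul_lt_smul_iff hc

lemma smul_lt_iff_neg {c : F} (hc : c < 0) {x m : M} : c • x < m ↔ c⁻¹ • m < x := by
  have hg : 0 < -c := neg_pos.2 hc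
  have h1 : c • x = -((-c) • x) := by rw [neg_smul, neg_neg]
  rw [h1, neg_lt, C.lt_smul_iff hg, inv_neg, neg_smul, smul_neg, neg_neg]

lemma lt_smul_iff_neg {c : F} (hc : c < 0) {x m : M} : m < c • x ↔ x < c⁻¹ • m := by
  have hg : 0 < -c := neg_pos.2 hc
  have h1 : c • x = -((-c) • x) := by rw [neg_smul, neg_neg]
  rw [h1, lt_neg, C.smul_lt_iff hg, inv_neg, neg_smul, smul_neg, neg_neg]

end Ctx

lemma smul_eq_iff' {c : F} (hc : c ≠ 0) {x m : M} : c • x = m ↔ x = c⁻¹ • m :=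
  ⟨fun h => by rw [← h, inv_smul_smul₀ hc], fun h => by rw [h, smul_inv_smul₀ hc]⟩

lemma smul_mem_iff' {c : F} (hc : c ≠ 0) {x m : M} :
    c • x - m ∈ Q ↔ x - c⁻¹ • m ∈ Q := by
  constructor
  · intro h
    have h2 := Q.smul_mem c⁻¹ h
    rwa [smul_sub, inv_smul_smul₀ hc] at h2
  · intro h
    have h2 := Q.smul_mem c h
    rwa [smul_sub, smul_inv_smul₀ hc] at h2

/-- A nonempty list of elements of a linear order has a maximum element. -/
lemma list_max {L : List M} (h : L ≠ []) : ∃ a ∈ L, ∀ l ∈ L, l ≤ a := by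
  induction L with
  | nil => exact absurd rfl h
  | cons x L ih =>
    rcases eq_or_ne L [] with rfl | hL
    · exact ⟨x, List.mem_cons_self, by simp⟩
    · obtain ⟨a, ha, hmax⟩ := ih hL
      rcases le_total x a with hxa | hax
      · exact ⟨a, List.mem_cons_of_mem _ ha, fun l hl => by
          rcases List.mem_cons.1 hl with rfl | hl
          · exact hxa
          · exact hmax l hl⟩
      · exact ⟨x, List.mem_cons_self, fun l hl => by
          rcases List.mem_cons.1 hl with rfl | hl
          · exact le_rfl
          · exact (hmax l hl).trans hax⟩

lemma list_min {L : List M} (h : L ≠ []) : ∃ a ∈ L, ∀ l ∈ L, a ≤ l := by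
  induction L with
  | nil => exact absurd rfl h
  | cons x L ih =>
    rcases eq_or_ne L [] with rfl | hL
    · exact ⟨x, List.mem_cons_self, by simp⟩
    · obtain ⟨a, ha, hmin⟩ := ih hL
      rcases le_total a x with hax | hxa
      · exact ⟨a, List.mem_cons_of_mem _ ha, fun l hl => by
          rcases List.mem_cons.1 hl with rfl | hl
          · exact hax
          · exact hmin l hl⟩
      · exact ⟨x, List.mem_cons_self, fun l hl => by
          rcases List.mem_cons.1 hl with rfl | hl
          · exact le_rfl
          · exact hxa.trans (hmin l hl)⟩

namespace Ctx

variable (C : Ctx F M Q)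
include C

/-- Find a point satisfying an order-dense predicate, strictly between two finite
lists of bounds. -/
lemma between {P : M → Prop} (hP : ∀ a b : M, a < b → ∃ y, a < y ∧ y < b ∧ P y)
    (Lo Up : List M) (h : ∀ l ∈ Lo, ∀ u ∈ Up, l < u) :
    ∃ y, (∀ l ∈ Lo, l < y) ∧ (∀ u ∈ Up, y < u) ∧ P y := by
  rcases eq_or_ne Lo [] with rfl | hLo
  · rcases eq_or_ne Up [] with rfl | hUp
    · obtain ⟨y, _, _, hy⟩ := hP (-C.one) C.one (neg_lt_self C.hone)
      exact ⟨y, by simp, by simp, hy⟩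
    · obtain ⟨u₀, hu₀, hmin⟩ := list_min hUp
      obtain ⟨y, _, hy2, hy⟩ := hP (u₀ - C.one) u₀ (sub_lt_self _ C.hone)
      exact ⟨y, by simp, fun u hu => lt_of_lt_of_le hy2 (hmin u hu), hy⟩
  · rcases eq_or_ne Up [] with rfl | hUp
    · obtain ⟨l₀, hl₀, hmax⟩ := list_max hLo
      obtain ⟨y, hy1, _, hy⟩ := hP l₀ (l₀ + C.one) (lt_add_of_pos_right _ C.hone)
      exact ⟨y, fun l hl => lt_of_le_of_lt (hmax l hl) hy1, by simp, hy⟩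
    · obtain ⟨l₀, hl₀, hmax⟩ := list_max hLo
      obtain ⟨u₀, hu₀, hmin⟩ := list_min hUp
      obtain ⟨y, hy1, hy2, hy⟩ := hP l₀ u₀ (h l₀ hl₀ u₀ hu₀)
      exact ⟨y, fun l hl => lt_of_le_of_lt (hmax l hl) hy1,
        fun u hu => lt_of_lt_of_le hy2 (hmin u hu), hy⟩

/-- Every coset of `Q` is order-dense. -/
lemma cosetDense (e : M) : ∀ a b : M, a < b → ∃ y, a < y ∧ y < b ∧ y - e ∈ Q := by
  intro a b hab
  obtain ⟨q, hq, h1, h2⟩ := C.hQdense (a - e) (b - e) (by exact sub_lt_sub_right hab e)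
  exact ⟨q + e, sub_lt_iff_lt_add.mp h1, lt_sub_iff_add_lt.mp h2, by simpa using hq⟩

/-- There is a point outside finitely many cosets of `Q`. -/
lemma exists_notin_cosets (fs : List M) : ∃ c : M, ∀ f ∈ fs, c - f ∉ Q := by
  obtain ⟨v₀, hv₀⟩ : ∃ v : M, v ∉ Q := by
    by_contra h
    push_neg at h
    exact C.hQproper (Set.eq_univ_of_forall h)
  by_contra hc
  push_neg at hc
  classical
  choose g hg1 hg2 using fun j : Fin (fs.length + 1) => hc ((j.val : F) • v₀)
  obtain ⟨j, -, j', -, hjj', hgg⟩ :=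
    Finset.exists_ne_map_eq_of_card_lt_of_maps_to
      (s := (Finset.univ : Finset (Fin (fs.length + 1)))) (t := fs.toFinset)
      (by simpa using Nat.lt_succ_of_le fs.toFinset_card_le)
      (fun j _ => List.mem_toFinset.2 (hg1 j))
  have hsub : ((j.val : F) - (j'.val : F)) • v₀ ∈ Q := by
    rw [sub_smul]
    have h2 := Q.sub_mem (hg2 j) (hg2 j')
    rwa [hgg, sub_sub_sub_cancel_right] at h2
  have hne : ((j.val : F) - (j'.val : F)) ≠ 0 := by
    rw [sub_ne_zero]
    exact fun h => hjj' (Fin.val_injective (Nat.cast_injective h))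
  exact hv₀ (by
    have h3 := Q.smul_mem ((j.val : F) - (j'.val : F))⁻¹ hsub
    rwa [inv_smul_smul₀ hne] at h3)

/-- The complement of finitely many cosets of `Q` is order-dense. -/
lemma avoidDense (fs : List M) : ∀ a b : M, a < b →
    ∃ y, a < y ∧ y < b ∧ ∀ f ∈ fs, y - f ∉ Q := by
  intro a b hab
  obtain ⟨c, hcf⟩ := C.exists_notin_cosets fs
  obtain ⟨y, h1, h2, hy⟩ := C.cosetDense c a b hab
  refine ⟨y, h1, h2, fun f hf hyf => hcf f hf ?_⟩
  have hcy : c - y ∈ Q := by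
    have := Q.neg_mem hy
    rwa [neg_sub] at this
  have h4 := Q.add_mem hcy hyf
  rwa [sub_add_sub_cancel] at h4

end Ctx

section DNF

variable (F M) in
/-- Literals of linear formulas over the variable set `ι`. -/
inductive Lit (ι : Type) : Type where
  | lt : (ι → F) → M → Lit ι
  | eq : (ι → F) → M → Lit ι
  | qq : (ι → F) → M → Lit ι
  | nq : (ι → F) → M → Lit ι

variable {ι κ : Type} [Fintype ι] [Fintype κ]

/-- Semantics of a literal. -/
def Lit.Sem (Q : Submodule F M) : Lit F M ι → (ι → M) → Prop
  | .lt f m, v => ∑ i, f i • v i < m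
  | .eq f m, v => ∑ i, f i • v i = m
  | .qq f m, v => ∑ i, f i • v i - m ∈ Q
  | .nq f m, v => ∑ i, f i • v i - m ∉ Q

variable (F M) in
/-- A clause: a finite conjunction of literals. -/
abbrev Clause (ι : Type) : Type := List (Lit F M ι)

variable (F M) in
/-- A formula in disjunctive normal form. -/
abbrev DNF (ι : Type) : Type := List (Clause F M ι)

/-- Semantics of a clause. -/
def cSem (Q : Submodule F M) (cl : Clause F M ι) (v : ι → M) : Prop := ∀ l ∈ cl, l.Sem Q v

/-- Semantics of a DNF formula. -/
def dSem (Q : Submodule F M) (d : DNF F M ι) (v : ι → M) : Prop := ∃ cl ∈ d, cSem Q cl v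

/-- A set is representable by a DNF linear formula. -/
def Rep (Q : Submodule F M) (S : Set (ι → M)) : Prop := ∃ d : DNF F M ι, S = {v | dSem Q d v}

lemma cSem_nil {v : ι → M} : cSem Q ([] : Clause F M ι) v := fun l hl => absurd hl (List.not_mem_nil)

lemma cSem_cons {l : Lit F M ι} {cl : Clause F M ι} {v : ι → M} :
    cSem Q (l :: cl) v ↔ l.Sem Q v ∧ cSem Q cl v := by
  constructor
  · exact fun h => ⟨h l (List.mem_cons_self), fun l' hl' => h l' (List.mem_cons_of_mem _ hl')⟩
  · rintro ⟨h1, h2⟩ l' hl'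
    rcases List.mem_cons.1 hl' with rfl | hl'
    · exact h1
    · exact h2 l' hl'

lemma cSem_append {cl cl' : Clause F M ι} {v : ι → M} :
    cSem Q (cl ++ cl') v ↔ cSem Q cl v ∧ cSem Q cl' v := by
  constructor
  · exact fun h => ⟨fun l hl => h l (List.mem_append_left _ hl),
      fun l hl => h l (List.mem_append_right _ hl)⟩
  · rintro ⟨h1, h2⟩ l hl
    rcases List.mem_append.1 hl with hl | hl
    · exact h1 l hl
    · exact h2 l hl

lemma dSem_cons {cl : Clause F M ι} {d : DNF F M ι} {v : ι → M} :
    dSem Q (cl :: d) v ↔ cSem Q cl v ∨ dSem Q d v := by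
  simp [dSem, List.mem_cons, or_and_right, exists_or]

lemma dSem_append {d d' : DNF F M ι} {v : ι → M} :
    dSem Q (d ++ d') v ↔ dSem Q d v ∨ dSem Q d' v := by
  simp [dSem, List.mem_append, or_and_right, exists_or]

lemma sum_neg_smul (f : ι → F) (v : ι → M) : ∑ i, (-f i) • v i = -∑ i, f i • v i := by
  simp [neg_smul]

/-- Negation of a literal, as a disjunctive list of literals. -/
def Lit.lnot : Lit F M ι → List (Lit F M ι)
  | .lt f m => [.eq f m, .lt (fun i => -f i) (-m)]
  | .eq f m => [.lt f m, .lt (fun i => -f i) (-m)]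
  | .qq f m => [.nq f m]
  | .nq f m => [.qq f m]

lemma Lit.lnot_sem (l : Lit F M ι) (v : ι → M) :
    (¬ l.Sem Q v) ↔ ∃ l' ∈ l.lnot, l'.Sem Q v := by
  cases l with
  | lt f m =>
    constructor
    · intro h
      simp only [Sem, not_lt] at h
      rcases lt_or_eq_of_le h with h | h
      · exact ⟨Lit.lt (fun i => -f i) (-m), by simp [lnot],
          by simp only [Sem, sum_neg_smul, neg_lt_neg_iff]; exact h⟩
      · exact ⟨Lit.eq f m, by simp [lnot], by simp only [Sem]; exact h.symm⟩
    · rintro ⟨l', hl', hsem⟩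
      simp only [lnot, List.mem_cons, List.not_mem_nil, or_false] at hl'
      rcases hl' with rfl | rfl
      · simp only [Sem] at hsem ⊢
        simp [hsem]
      · simp only [Sem, sum_neg_smul, neg_lt_neg_iff] at hsem ⊢
        exact not_lt.2 (le_of_lt hsem)
  | eq f m =>
    constructor
    · intro h
      simp only [Sem] at h
      rcases lt_or_gt_of_ne h with h | h
      · exact ⟨Lit.lt f m, by simp [lnot], by simp only [Sem]; exact h⟩
      · exact ⟨Lit.lt (fun i => -f i) (-m), by simp [lnot],
          by simp only [Sem, sum_neg_smul, neg_lt_neg_iff]; exact h⟩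
    · rintro ⟨l', hl', hsem⟩
      simp only [lnot, List.mem_cons, List.not_mem_nil, or_false] at hl'
      rcases hl' with rfl | rfl
      · simp only [Sem] at hsem ⊢
        exact ne_of_lt hsem
      · simp only [Sem, sum_neg_smul, neg_lt_neg_iff] at hsem ⊢
        exact ne_of_gt hsem
  | qq f m => simp [Sem, lnot]
  | nq f m => simp [Sem, lnot]

/-- Negation of a clause, as a DNF. -/
def cnot (cl : Clause F M ι) : DNF F M ι := cl.flatMap fun l => l.lnot.map (fun l' => [l'])

lemma cnot_sem (cl : Clause F M ι) (v : ι → M) :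
    dSem Q (cnot cl) v ↔ ¬ cSem Q cl v := by
  simp only [cnot, dSem, List.mem_flatMap, List.mem_map, cSem, not_forall]
  constructor
  · rintro ⟨c, ⟨l, hl, l', hl', rfl⟩, hc⟩
    refine ⟨l, hl, (l.lnot_sem v).2 ⟨l', hl', ?_⟩⟩
    exact hc l' (List.mem_singleton_self _)
  · rintro ⟨l, hl, hnl⟩
    obtain ⟨l', hl', hsem⟩ := (l.lnot_sem v).1 hnl
    refine ⟨[l'], ⟨l, hl, l', hl', rfl⟩, ?_⟩
    intro x hx
    rcases List.mem_singleton.1 hx with rfl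
    exact hsem

/-- Negation of a DNF, as a DNF. -/
def dnot : DNF F M ι → DNF F M ι
  | [] => [([] : Clause F M ι)]
  | cl :: d => (dnot d).flatMap fun c => (cnot cl).flatMap fun c' => [c' ++ c]

lemma dnot_sem (d : DNF F M ι) (v : ι → M) : dSem Q (dnot d) v ↔ ¬ dSem Q d v := by
  induction d with
  | nil =>
    simp [dnot, dSem, cSem_nil]
  | cons cl d ih =>
    rw [dSem_cons]
    push_neg
    constructor
    · rintro ⟨c₀, hc₀, hsem⟩
      simp only [dnot, List.mem_flatMap, List.mem_singleton] at hc₀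
      obtain ⟨c, hc, c', hc', rfl⟩ := hc₀
      rw [cSem_append] at hsem
      refine ⟨?_, ?_⟩
      · rw [← cnot_sem (Q := Q) cl v]
        exact ⟨c', hc', hsem.1⟩
      · exact ih.1 ⟨c, hc, hsem.2⟩
    · rintro ⟨h1, h2⟩
      obtain ⟨c, hc, hcsem⟩ := ih.2 h2
      obtain ⟨c', hc', hc'sem⟩ := (cnot_sem (Q := Q) cl v).2 h1
      refine ⟨c' ++ c, ?_, cSem_append.2 ⟨hc'sem, hcsem⟩⟩
      simp only [dnot, List.mem_flatMap, List.mem_singleton]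
      exact ⟨c, hc, c', hc', rfl⟩

lemma Rep.union {S T : Set (ι → M)} (hS : Rep Q S) (hT : Rep Q T) : Rep Q (S ∪ T) := by
  obtain ⟨d1, rfl⟩ := hS
  obtain ⟨d2, rfl⟩ := hT
  exact ⟨d1 ++ d2, by ext v; simp [dSem_append]⟩

lemma Rep.compl {S : Set (ι → M)} (hS : Rep Q S) : Rep Q Sᶜ := by
  obtain ⟨d, rfl⟩ := hS
  exact ⟨dnot d, by ext v; simp [dnot_sem]⟩

lemma Rep.inter {S T : Set (ι → M)} (hS : Rep Q S) (hT : Rep Q T) : Rep Q (S ∩ T) := by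
  have h := (hS.compl.union hT.compl).compl
  rwa [compl_union, _root_.compl_compl, _root_.compl_compl] at h

lemma rep_empty : Rep Q (∅ : Set (ι → M)) := ⟨[], by ext v; simp [dSem]⟩

lemma rep_univ : Rep Q (Set.univ : Set (ι → M)) := ⟨[([] : Clause F M ι)], by ext v; simp [dSem, cSem_nil]⟩

lemma rep_lit (l : Lit F M ι) : Rep Q {v | l.Sem Q v} := by
  refine ⟨[([l] : Clause F M ι)], by ext v; simp [dSem, cSem_cons, cSem_nil]⟩

/-- Transport a representation along an equivalence of variable sets. -/
lemma Rep.reindex (e : ι ≃ κ) {S : Set (κ → M)} (hS : Rep Q S) :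
    Rep Q {u : ι → M | (fun j => u (e.symm j)) ∈ S} := by
  obtain ⟨d, rfl⟩ := hS
  have hlit : ∀ l : Lit F M κ, ∃ l' : Lit F M ι, ∀ u : ι → M,
      (l'.Sem Q u ↔ l.Sem Q (fun j => u (e.symm j))) := by
    intro l
    have key : ∀ (f : κ → F) (u : ι → M),
        ∑ i, (f (e i)) • u i = ∑ j, f j • u (e.symm j) := by
      intro f u
      rw [← Equiv.sum_comp e (fun j => f j • u (e.symm j))]
      simp
    cases l with
    | lt f m => exact ⟨.lt (fun i => f (e i)) m, fun u => by simp [Lit.Sem, key]⟩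
    | eq f m => exact ⟨.eq (fun i => f (e i)) m, fun u => by simp [Lit.Sem, key]⟩
    | qq f m => exact ⟨.qq (fun i => f (e i)) m, fun u => by simp [Lit.Sem, key]⟩
    | nq f m => exact ⟨.nq (fun i => f (e i)) m, fun u => by simp [Lit.Sem, key]⟩
  choose tr htr using hlit
  refine ⟨d.map (fun cl => cl.map tr), ?_⟩
  ext u
  simp only [Set.mem_setOf_eq, dSem, List.mem_map]
  constructor
  · rintro ⟨cl, hcl, hsem⟩
    refine ⟨cl.map tr, ⟨cl, hcl, rfl⟩, ?_⟩
    intro l' hl'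
    obtain ⟨l, hl, rfl⟩ := List.mem_map.1 hl'
    exact (htr l u).2 (hsem l hl)
  · rintro ⟨c, ⟨cl, hcl, rfl⟩, hsem⟩
    refine ⟨cl, hcl, fun l hl => ?_⟩
    exact (htr l u).1 (hsem (tr l) (List.mem_map.2 ⟨l, hl, rfl⟩))

end DNF

section Proj

variable {ι : Type} [Fintype ι]

/-- Extend a valuation by a value for the `none` variable. -/
def extendO (v : ι → M) (y : M) : Option ι → M := fun o => o.elim y v

@[simp] lemma extendO_some (v : ι → M) (y : M) (i : ι) : extendO v y (some i) = v i := rfl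

@[simp] lemma extendO_none (v : ι → M) (y : M) : extendO v y none = y := rfl

/-- Value of an affine expression. -/
def aff (f : ι → F) (m : M) (v : ι → M) : M := ∑ i, f i • v i + m

variable (F M) in
/-- Literals normalized in the variable `y`. -/
inductive YLit (ι : Type) : Type where
  | ylt : (ι → F) → M → YLit ι
  | ygt : (ι → F) → M → YLit ι
  | yeq : (ι → F) → M → YLit ι
  | yqq : (ι → F) → M → YLit ι
  | ynq : (ι → F) → M → YLit ι

/-- Semantics of a `y`-literal. -/
def YLit.Sem (Q : Submodule F M) : YLit F M ι → (ι → M) → M → Prop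
  | .ylt f m, v, y => y < aff f m v
  | .ygt f m, v, y => aff f m v < y
  | .yeq f m, v, y => y = aff f m v
  | .yqq f m, v, y => y - aff f m v ∈ Q
  | .ynq f m, v, y => y - aff f m v ∉ Q

/-- Normalized coefficients for the solved form. -/
def uCoef (f : Option ι → F) : ι → F := fun i => -((f none)⁻¹ * f (some i))

/-- Normalized constant for the solved form. -/
def uConst (f : Option ι → F) (m : M) : M := (f none)⁻¹ • m

lemma aff_uCoef (f : Option ι → F) (m : M) (v : ι → M) :
    aff (uCoef f) (uConst f m) v = (f none)⁻¹ • (m - ∑ i, f (some i) • v i) := by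
  simp only [aff, uCoef, uConst, neg_smul, mul_smul, smul_sub, Finset.sum_neg_distrib,
    ← Finset.smul_sum]
  abel

lemma sum_option_smul (f : Option ι → F) (v : ι → M) (y : M) :
    ∑ o : Option ι, f o • (extendO v y) o = f none • y + ∑ i, f (some i) • v i := by
  rw [Fintype.sum_option]
  rfl

/-- Split a literal over `Option ι` into a base literal or a `y`-literal. -/
def splitLit : Lit F M (Option ι) → Lit F M ι ⊕ YLit F M ι
  | .lt f m =>
    if f none = 0 then .inl (.lt (fun i => f (some i)) m)
    else if 0 < f none then .inr (.ylt (uCoef f) (uConst f m))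
    else .inr (.ygt (uCoef f) (uConst f m))
  | .eq f m =>
    if f none = 0 then .inl (.eq (fun i => f (some i)) m)
    else .inr (.yeq (uCoef f) (uConst f m))
  | .qq f m =>
    if f none = 0 then .inl (.qq (fun i => f (some i)) m)
    else .inr (.yqq (uCoef f) (uConst f m))
  | .nq f m =>
    if f none = 0 then .inl (.nq (fun i => f (some i)) m)
    else .inr (.ynq (uCoef f) (uConst f m))

lemma splitLit_sem (C : Ctx F M Q) (l : Lit F M (Option ι)) (v : ι → M) (y : M) :
    l.Sem Q (extendO v y) ↔ (match splitLit l with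
      | .inl b => b.Sem Q v
      | .inr yl => yl.Sem Q v y) := by
  cases l with
  | lt f m =>
    by_cases h0 : f none = 0
    · simp [splitLit, h0, Lit.Sem, sum_option_smul]
    · rcases lt_trichotomy (f none) 0 with hneg | h | hpos
      · have : ¬ (0 < f none) := not_lt.2 hneg.le
        simp only [splitLit, h0, if_false, this, Lit.Sem, sum_option_smul, YLit.Sem, aff_uCoef]
        rw [← lt_sub_iff_add_lt, C.smul_lt_iff_neg hneg]
      · exact absurd h h0
      · simp only [splitLit, h0, if_false, hpos, if_true, Lit.Sem, sum_option_smul, YLit.Sem,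
          aff_uCoef]
        rw [← lt_sub_iff_add_lt, C.smul_lt_iff hpos]
  | eq f m =>
    by_cases h0 : f none = 0
    · simp [splitLit, h0, Lit.Sem, sum_option_smul]
    · simp only [splitLit, h0, if_false, Lit.Sem, sum_option_smul, YLit.Sem, aff_uCoef]
      rw [← eq_sub_iff_add_eq, smul_eq_iff' h0]
  | qq f m =>
    by_cases h0 : f none = 0
    · simp [splitLit, h0, Lit.Sem, sum_option_smul]
    · simp only [splitLit, h0, if_false, Lit.Sem, sum_option_smul, YLit.Sem, aff_uCoef]
      have hrw : f none • y + ∑ i, f (some i) • v i - m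
          = f none • y - (m - ∑ i, f (some i) • v i) := by abel
      rw [hrw, smul_mem_iff' h0]
  | nq f m =>
    by_cases h0 : f none = 0
    · simp [splitLit, h0, Lit.Sem, sum_option_smul]
    · simp only [splitLit, h0, if_false, Lit.Sem, sum_option_smul, YLit.Sem, aff_uCoef]
      have hrw : f none • y + ∑ i, f (some i) • v i - m
          = f none • y - (m - ∑ i, f (some i) • v i) := by abel
      rw [hrw]
      exact not_congr (smul_mem_iff' h0)

/-- Split a clause over `Option ι` into base literals and `y`-literals. -/
def splitClause (cl : Clause F M (Option ι)) : Clause F M ι × List (YLit F M ι) :=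
  cl.foldr (fun l acc => match splitLit l with
    | .inl b => (b :: acc.1, acc.2)
    | .inr yl => (acc.1, yl :: acc.2)) ([], [])

lemma splitClause_sem (C : Ctx F M Q) (cl : Clause F M (Option ι)) (v : ι → M) (y : M) :
    cSem Q cl (extendO v y) ↔
      cSem Q (splitClause cl).1 v ∧ ∀ yl ∈ (splitClause cl).2, yl.Sem Q v y := by
  induction cl with
  | nil => simp [splitClause, cSem_nil]
  | cons l cl ih =>
    rw [cSem_cons, ih, splitLit_sem C l v y]
    rcases hsp : splitLit l with b | yl
    · have h1 : splitClause (l :: cl) = (b :: (splitClause cl).1, (splitClause cl).2) := by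
        simp [splitClause, List.foldr_cons, hsp]
      rw [h1, cSem_cons]
      tauto
    · have h1 : splitClause (l :: cl) = ((splitClause cl).1, yl :: (splitClause cl).2) := by
        simp [splitClause, List.foldr_cons, hsp]
      rw [h1]
      simp only [List.mem_cons, forall_eq_or_imp]
      tauto

/-- Extract upper bounds. -/
def ups (ys : List (YLit F M ι)) : List ((ι → F) × M) :=
  ys.filterMap fun yl => match yl with | .ylt f m => some (f, m) | _ => none

/-- Extract lower bounds. -/
def lows (ys : List (YLit F M ι)) : List ((ι → F) × M) :=
  ys.filterMap fun yl => match yl with | .ygt f m => some (f, m) | _ => none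

/-- Extract equations. -/
def eqs (ys : List (YLit F M ι)) : List ((ι → F) × M) :=
  ys.filterMap fun yl => match yl with | .yeq f m => some (f, m) | _ => none

/-- Extract coset conditions. -/
def mods (ys : List (YLit F M ι)) : List ((ι → F) × M) :=
  ys.filterMap fun yl => match yl with | .yqq f m => some (f, m) | _ => none

/-- Extract negated coset conditions. -/
def nmods (ys : List (YLit F M ι)) : List ((ι → F) × M) :=
  ys.filterMap fun yl => match yl with | .ynq f m => some (f, m) | _ => none

lemma mem_ups {ys : List (YLit F M ι)} {p : (ι → F) × M} :
    p ∈ ups ys ↔ YLit.ylt p.1 p.2 ∈ ys := by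
  simp only [ups, List.mem_filterMap]
  constructor
  · rintro ⟨yl, hyl, hE⟩
    cases yl <;> simp_all [Prod.ext_iff]
  · exact fun h => ⟨_, h, by rfl⟩

lemma mem_lows {ys : List (YLit F M ι)} {p : (ι → F) × M} :
    p ∈ lows ys ↔ YLit.ygt p.1 p.2 ∈ ys := by
  simp only [lows, List.mem_filterMap]
  constructor
  · rintro ⟨yl, hyl, hE⟩
    cases yl <;> simp_all [Prod.ext_iff]
  · exact fun h => ⟨_, h, by rfl⟩

lemma mem_eqs {ys : List (YLit F M ι)} {p : (ι → F) × M} :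
    p ∈ eqs ys ↔ YLit.yeq p.1 p.2 ∈ ys := by
  simp only [eqs, List.mem_filterMap]
  constructor
  · rintro ⟨yl, hyl, hE⟩
    cases yl <;> simp_all [Prod.ext_iff]
  · exact fun h => ⟨_, h, by rfl⟩

lemma mem_mods {ys : List (YLit F M ι)} {p : (ι → F) × M} :
    p ∈ mods ys ↔ YLit.yqq p.1 p.2 ∈ ys := by
  simp only [mods, List.mem_filterMap]
  constructor
  · rintro ⟨yl, hyl, hE⟩
    cases yl <;> simp_all [Prod.ext_iff]
  · exact fun h => ⟨_, h, by rfl⟩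

lemma mem_nmods {ys : List (YLit F M ι)} {p : (ι → F) × M} :
    p ∈ nmods ys ↔ YLit.ynq p.1 p.2 ∈ ys := by
  simp only [nmods, List.mem_filterMap]
  constructor
  · rintro ⟨yl, hyl, hE⟩
    cases yl <;> simp_all [Prod.ext_iff]
  · exact fun h => ⟨_, h, by rfl⟩

lemma sum_sub_smul (p q : ι → F) (v : ι → M) :
    ∑ i, (p i - q i) • v i = ∑ i, p i • v i - ∑ i, q i • v i := by
  simp [sub_smul, Finset.sum_sub_distrib]

lemma aff_lt_sem (p q : (ι → F) × M) (v : ι → M) :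
    (Lit.lt (fun i => p.1 i - q.1 i) (q.2 - p.2)).Sem Q v ↔ aff p.1 p.2 v < aff q.1 q.2 v := by
  simp only [Lit.Sem, aff, sum_sub_smul]
  rw [sub_lt_sub_iff]
  exact ⟨fun h => h.trans_eq (add_comm _ _), fun h => h.trans_eq (add_comm _ _)⟩

lemma aff_eq_sem (p q : (ι → F) × M) (v : ι → M) :
    (Lit.eq (fun i => p.1 i - q.1 i) (q.2 - p.2)).Sem Q v ↔ aff p.1 p.2 v = aff q.1 q.2 v := by
  simp only [Lit.Sem, aff, sum_sub_smul]
  rw [sub_eq_sub_iff_add_eq_add]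
  exact ⟨fun h => h.trans (add_comm _ _), fun h => h.trans (add_comm _ _)⟩

lemma aff_qq_sem (p q : (ι → F) × M) (v : ι → M) :
    (Lit.qq (fun i => p.1 i - q.1 i) (q.2 - p.2)).Sem Q v ↔
      aff p.1 p.2 v - aff q.1 q.2 v ∈ Q := by
  simp only [Lit.Sem, aff, sum_sub_smul]
  have hrw : ∑ i, p.1 i • v i - ∑ i, q.1 i • v i - (q.2 - p.2)
      = (∑ i, p.1 i • v i + p.2) - (∑ i, q.1 i • v i + q.2) := by abel
  rw [hrw]

lemma aff_nq_sem (p q : (ι → F) × M) (v : ι → M) :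
    (Lit.nq (fun i => p.1 i - q.1 i) (q.2 - p.2)).Sem Q v ↔
      aff p.1 p.2 v - aff q.1 q.2 v ∉ Q := by
  simp only [Lit.Sem, aff, sum_sub_smul]
  have hrw : ∑ i, p.1 i • v i - ∑ i, q.1 i • v i - (q.2 - p.2)
      = (∑ i, p.1 i • v i + p.2) - (∑ i, q.1 i • v i + q.2) := by abel
  rw [hrw]

/-- Substitute the solution `e` for `y` in a `y`-literal. -/
def substY (e : (ι → F) × M) : YLit F M ι → Lit F M ι
  | .ylt f m => .lt (fun i => e.1 i - f i) (m - e.2)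
  | .ygt f m => .lt (fun i => f i - e.1 i) (e.2 - m)
  | .yeq f m => .eq (fun i => e.1 i - f i) (m - e.2)
  | .yqq f m => .qq (fun i => e.1 i - f i) (m - e.2)
  | .ynq f m => .nq (fun i => e.1 i - f i) (m - e.2)

lemma substY_sem (e : (ι → F) × M) (yl : YLit F M ι) (v : ι → M) :
    (substY e yl).Sem Q v ↔ yl.Sem Q v (aff e.1 e.2 v) := by
  cases yl with
  | ylt f m => exact aff_lt_sem e (f, m) v
  | ygt f m => exact aff_lt_sem (f, m) e v
  | yeq f m => exact aff_eq_sem e (f, m) v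
  | yqq f m => exact aff_qq_sem e (f, m) v
  | ynq f m => exact aff_nq_sem e (f, m) v

/-- Pairwise bound compatibility literals. -/
def boundLits (ys : List (YLit F M ι)) : Clause F M ι :=
  (lows ys).flatMap fun l => (ups ys).map fun u => Lit.lt (fun i => l.1 i - u.1 i) (u.2 - l.2)

/-- Coset compatibility literals, relative to a list of coset requirements. -/
def modLitsE (ys : List (YLit F M ι)) : List ((ι → F) × M) → Clause F M ι
  | [] => []
  | e₀ :: _ =>
      ((mods ys).map fun e => Lit.qq (fun i => e₀.1 i - e.1 i) (e.2 - e₀.2)) ++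
      ((nmods ys).map fun f => Lit.nq (fun i => e₀.1 i - f.1 i) (f.2 - e₀.2))

/-- Coset compatibility literals. -/
def modLits (ys : List (YLit F M ι)) : Clause F M ι := modLitsE ys (mods ys)

/-- Result of eliminating `y`, given the list of equations. -/
def projAuxE (base : Clause F M ι) (ys : List (YLit F M ι)) :
    List ((ι → F) × M) → Clause F M ι
  | e :: _ => base ++ ys.map (substY e)
  | [] => base ++ boundLits ys ++ modLits ys

/-- Eliminate `y` from a split clause. -/
def projAux (base : Clause F M ι) (ys : List (YLit F M ι)) : Clause F M ι :=
  projAuxE base ys (eqs ys)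

/-- Eliminate the variable `none` from a clause over `Option ι`. -/
def projClause (cl : Clause F M (Option ι)) : Clause F M ι :=
  projAux (splitClause cl).1 (splitClause cl).2

theorem projAux_sem (C : Ctx F M Q) (base : Clause F M ι) (ys : List (YLit F M ι)) (v : ι → M) :
    (∃ y, cSem Q base v ∧ ∀ yl ∈ ys, yl.Sem Q v y) ↔ cSem Q (projAux base ys) v := by
  rcases heq : eqs ys with _ | ⟨e, rest⟩
  · -- no equations
    have hnoeq : ∀ f : (ι → F), ∀ m : M, YLit.yeq f m ∉ ys := by
      intro f m h
      have h2 : ((f, m) : (ι → F) × M) ∈ eqs ys := mem_eqs.2 h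
      rw [heq] at h2
      exact absurd h2 (List.not_mem_nil)
    rw [projAux, heq]
    show _ ↔ cSem Q (base ++ boundLits ys ++ modLits ys) v
    rw [cSem_append, cSem_append]
    constructor
    · rintro ⟨y, hbase, hys⟩
      refine ⟨⟨hbase, ?_⟩, ?_⟩
      · intro lit hlit
        simp only [boundLits, List.mem_flatMap, List.mem_map] at hlit
        obtain ⟨l, hl, u, hu, rfl⟩ := hlit
        rw [aff_lt_sem]
        exact lt_trans (hys _ (mem_lows.1 hl)) (hys _ (mem_ups.1 hu))
      · intro lit hlit
        rw [modLits] at hlit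
        rcases hm : mods ys with _ | ⟨e₀, rest₀⟩
        · rw [hm] at hlit
          exact absurd hlit (List.not_mem_nil)
        · rw [hm] at hlit
          show lit.Sem Q v
          rcases List.mem_append.1 hlit with hlit | hlit
          · obtain ⟨e, he, rfl⟩ := List.mem_map.1 hlit
            rw [aff_qq_sem]
            have h1 : y - aff e₀.1 e₀.2 v ∈ Q :=
              hys _ (mem_mods.1 (show e₀ ∈ mods ys from hm ▸ List.mem_cons_self))
            have h2 : y - aff e.1 e.2 v ∈ Q := hys _ (mem_mods.1 he)
            have h3 := Q.sub_mem h2 h1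
            rwa [sub_sub_sub_cancel_left] at h3
          · obtain ⟨p, hp, rfl⟩ := List.mem_map.1 hlit
            rw [aff_nq_sem]
            intro hmem
            have h1 : y - aff e₀.1 e₀.2 v ∈ Q :=
              hys _ (mem_mods.1 (show e₀ ∈ mods ys from hm ▸ List.mem_cons_self))
            have h2 := Q.add_mem h1 hmem
            rw [sub_add_sub_cancel] at h2
            exact hys _ (mem_nmods.1 hp) h2
    · rintro ⟨⟨hbase, hbound⟩, hmod⟩
      have hpair : ∀ lv ∈ (lows ys).map (fun p => aff p.1 p.2 v),
          ∀ uv ∈ (ups ys).map (fun p => aff p.1 p.2 v), lv < uv := by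
        rintro lv hlv uv huv
        obtain ⟨l, hl, rfl⟩ := List.mem_map.1 hlv
        obtain ⟨u, hu, rfl⟩ := List.mem_map.1 huv
        have := hbound _ (by
          simp only [boundLits, List.mem_flatMap, List.mem_map]
          exact ⟨l, hl, u, hu, rfl⟩)
        rwa [aff_lt_sem] at this
      rcases hm : mods ys with _ | ⟨e₀, rest₀⟩
      · obtain ⟨y, hLo, hUp, hP⟩ := C.between
          (P := fun y => ∀ m ∈ (nmods ys).map (fun p => aff p.1 p.2 v), y - m ∉ Q)
          (C.avoidDense _) _ _ hpair
        refine ⟨y, hbase, fun yl hyl => ?_⟩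
        cases yl with
        | ylt f m => exact hUp _ (List.mem_map_of_mem ((mem_ups (p := (f, m))).2 hyl))
        | ygt f m => exact hLo _ (List.mem_map_of_mem ((mem_lows (p := (f, m))).2 hyl))
        | yeq f m => exact absurd hyl (hnoeq f m)
        | yqq f m =>
          have : ((f, m) : (ι → F) × M) ∈ mods ys := (mem_mods (p := (f, m))).2 hyl
          rw [hm] at this
          exact absurd this (List.not_mem_nil)
        | ynq f m => exact hP _ (List.mem_map_of_mem ((mem_nmods (p := (f, m))).2 hyl))
      · obtain ⟨y, hLo, hUp, hP⟩ := C.between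
          (P := fun y => y - aff e₀.1 e₀.2 v ∈ Q) (C.cosetDense _) _ _ hpair
        have hmodsem : ∀ lit ∈ modLits ys, lit.Sem Q v := hmod
        rw [modLits, hm] at hmodsem
        refine ⟨y, hbase, fun yl hyl => ?_⟩
        cases yl with
        | ylt f m => exact hUp _ (List.mem_map_of_mem ((mem_ups (p := (f, m))).2 hyl))
        | ygt f m => exact hLo _ (List.mem_map_of_mem ((mem_lows (p := (f, m))).2 hyl))
        | yeq f m => exact absurd hyl (hnoeq f m)
        | yqq f m =>
          have hq := hmodsem _ (List.mem_append_left _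
            (List.mem_map_of_mem ((mem_mods (p := (f, m))).2 hyl)))
          rw [aff_qq_sem] at hq
          have h2 := Q.add_mem hP hq
          show y - aff f m v ∈ Q
          rwa [sub_add_sub_cancel] at h2
        | ynq f m =>
          have hq := hmodsem _ (List.mem_append_right _
            (List.mem_map_of_mem ((mem_nmods (p := (f, m))).2 hyl)))
          rw [aff_nq_sem] at hq
          show y - aff f m v ∉ Q
          intro hmem
          have h3 := Q.sub_mem hmem hP
          rw [sub_sub_sub_cancel_left] at h3
          exact hq h3
  · -- an equation is present
    have he : YLit.yeq e.1 e.2 ∈ ys := mem_eqs.1 (heq ▸ List.mem_cons_self)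
    rw [projAux, heq]
    show _ ↔ cSem Q (base ++ ys.map (substY e)) v
    rw [cSem_append]
    constructor
    · rintro ⟨y, hbase, hys⟩
      have hy : y = aff e.1 e.2 v := hys _ he
      refine ⟨hbase, fun lit hlit => ?_⟩
      obtain ⟨yl, hyl, rfl⟩ := List.mem_map.1 hlit
      rw [substY_sem, ← hy]
      exact hys yl hyl
    · rintro ⟨hbase, hsub⟩
      refine ⟨aff e.1 e.2 v, hbase, fun yl hyl => ?_⟩
      rw [← substY_sem]
      exact hsub _ (List.mem_map_of_mem hyl)

theorem projClause_sem (C : Ctx F M Q) (cl : Clause F M (Option ι)) (v : ι → M) :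
    (∃ y, cSem Q cl (extendO v y)) ↔ cSem Q (projClause cl) v := by
  rw [projClause, ← projAux_sem C]
  exact exists_congr fun y => splitClause_sem C cl v y

/-- Representable sets are closed under projection. -/
theorem Rep.proj (C : Ctx F M Q) {S : Set (Option ι → M)} (hS : Rep Q S) :
    Rep Q {v : ι → M | ∃ y, extendO v y ∈ S} := by
  obtain ⟨d, rfl⟩ := hS
  refine ⟨d.map projClause, ?_⟩
  ext v
  simp only [Set.mem_setOf_eq, dSem, List.mem_map]
  constructor
  · rintro ⟨y, cl, hcl, hsem⟩
    exact ⟨projClause cl, ⟨cl, hcl, rfl⟩, (projClause_sem C cl v).1 ⟨y, hsem⟩⟩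
  · rintro ⟨c, ⟨cl, hcl, rfl⟩, hsem⟩
    obtain ⟨y, hy⟩ := (projClause_sem C cl v).2 hsem
    exact ⟨y, cl, hcl, hy⟩

/-- Representable sets are closed under universal quantification. -/
theorem Rep.forallY (C : Ctx F M Q) {S : Set (Option ι → M)} (hS : Rep Q S) :
    Rep Q {v : ι → M | ∀ y, extendO v y ∈ S} := by
  have h := (hS.compl.proj C).compl
  convert h using 1
  ext v
  simp

end Proj


section Forms

/-- The equivalence used for the `all` case. -/
def optEquiv (k n : ℕ) : Option (Fin k ⊕ Fin n) ≃ (Fin k ⊕ Fin (n + 1)) where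
  toFun o := o.elim (Sum.inr (Fin.last n)) (Sum.map id Fin.castSucc)
  invFun s := s.elim (fun i => some (Sum.inl i))
    (fun j => Fin.lastCases none (fun j' => some (Sum.inr j')) j)
  left_inv o := by
    rcases o with _ | s
    · simp
    · rcases s with i | j <;> simp
  right_inv s := by
    rcases s with i | j
    · simp
    · refine Fin.lastCases ?_ ?_ j <;> simp

theorem definable_to_rep {Q : Submodule F M} (C : Ctx F M Q) (one : M) {k : ℕ}
    {S : Set (Fin k → M)} (hS : POVSDefinable F M one ↑Q S) : Rep Q S := by
  classical
  unfold POVSDefinable DefinableIn at hS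
  letI inst : (LP F).Structure M := LPStruc F M one ↑Q
  obtain ⟨φ, rfl⟩ := hS
  -- every term is affine
  have hterm : ∀ (ι : Type) [Fintype ι] (t : ((LP F)[[(Set.univ : Set M)]]).Term ι),
      ∃ (f : ι → F) (c : M), ∀ v : ι → M, t.realize v = ∑ i, f i • v i + c := by
    intro ι _ t
    induction t with
    | var i =>
      refine ⟨fun j => if j = i then 1 else 0, 0, fun v => ?_⟩
      simp [ite_smul, Finset.sum_ite_eq']
    | @func l f ts ih =>
      rcases f with f | c
      · cases f with
        | add =>
          obtain ⟨f₀, c₀, h₀⟩ := ih 0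
          obtain ⟨f₁, c₁, h₁⟩ := ih 1
          refine ⟨fun i => f₀ i + f₁ i, c₀ + c₁, fun v => ?_⟩
          have : Term.realize v (Term.func (Sum.inl LPFunc.add) ts)
              = (ts 0).realize v + (ts 1).realize v := rfl
          rw [this, h₀, h₁]
          simp only [add_smul, Finset.sum_add_distrib]
          abel
        | neg =>
          obtain ⟨f₀, c₀, h₀⟩ := ih 0
          refine ⟨fun i => -(f₀ i), -c₀, fun v => ?_⟩
          have : Term.realize v (Term.func (Sum.inl LPFunc.neg) ts)
              = -((ts 0).realize v) := rfl
          rw [this, h₀]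
          simp only [neg_smul, Finset.sum_neg_distrib]
          abel
        | zero =>
          refine ⟨fun _ => 0, 0, fun v => ?_⟩
          have : Term.realize v (Term.func (Sum.inl LPFunc.zero) ts) = 0 := rfl
          rw [this]
          simp
        | one =>
          refine ⟨fun _ => 0, one, fun v => ?_⟩
          have : Term.realize v (Term.func (Sum.inl LPFunc.one) ts) = one := rfl
          rw [this]
          simp
        | smul a =>
          obtain ⟨f₀, c₀, h₀⟩ := ih 0
          refine ⟨fun i => a * f₀ i, a • c₀, fun v => ?_⟩
          have : Term.realize v (Term.func (Sum.inl (LPFunc.smul a)) ts)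
              = a • ((ts 0).realize v) := rfl
          rw [this, h₀]
          simp only [smul_add, Finset.smul_sum, mul_smul]
      · match l, c with
        | 0, c =>
          refine ⟨fun _ => 0, Subtype.val (c : (Set.univ : Set M)), fun v => ?_⟩
          have hts : ts = default := Subsingleton.elim _ _
          have : Term.func (Sum.inr c) ts = ((LP F).con c).term := by
            rw [hts]; rfl
          refine Eq.trans (show Term.realize v (Term.func (Sum.inr c) ts) = (c : M) from rfl) ?_
          simp only [zero_smul, Finset.sum_const_zero, zero_add]
          rfl
  -- every definable set is representable
  have hform : ∀ (n : ℕ) (ψ : ((LP F)[[(Set.univ : Set M)]]).BoundedFormula (Fin k) n),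
      Rep Q {v : (Fin k ⊕ Fin n) → M | ψ.Realize (v ∘ Sum.inl) (v ∘ Sum.inr)} := by
    intro n ψ
    induction ψ with
    | @falsum m =>
      have : {v : (Fin k ⊕ Fin m) → M |
          BoundedFormula.Realize
            (BoundedFormula.falsum : ((LP F)[[(Set.univ : Set M)]]).BoundedFormula (Fin k) m)
            (v ∘ Sum.inl) (v ∘ Sum.inr)} = (∅ : Set ((Fin k ⊕ Fin m) → M)) := by
        ext v
        simp [BoundedFormula.Realize]
      rw [this]
      exact rep_empty
    | equal t₁ t₂ =>
      obtain ⟨f₁, c₁, h₁⟩ := hterm _ t₁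
      obtain ⟨f₂, c₂, h₂⟩ := hterm _ t₂
      have : {v : (Fin k ⊕ Fin _) → M |
          BoundedFormula.Realize (BoundedFormula.equal t₁ t₂) (v ∘ Sum.inl) (v ∘ Sum.inr)}
          = {v | (Lit.eq (fun i => f₁ i - f₂ i) (c₂ - c₁) : Lit F M _).Sem Q v} := by
        ext v
        rw [Set.mem_setOf_eq, Set.mem_setOf_eq, aff_eq_sem (p := (f₁, c₁)) (q := (f₂, c₂))]
        show (t₁.realize (Sum.elim (v ∘ Sum.inl) (v ∘ Sum.inr))
          = t₂.realize (Sum.elim (v ∘ Sum.inl) (v ∘ Sum.inr))) ↔ _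
        rw [Sum.elim_comp_inl_inr, h₁ v, h₂ v]
        rfl
      rw [this]; exact rep_lit _
    | @rel n l R ts =>
      rcases R with r | r
      · cases r with
        | lt =>
          obtain ⟨f₁, c₁, h₁⟩ := hterm _ (ts 0)
          obtain ⟨f₂, c₂, h₂⟩ := hterm _ (ts 1)
          have : {v : (Fin k ⊕ Fin _) → M |
              BoundedFormula.Realize (BoundedFormula.rel (Sum.inl LPRel.lt) ts)
                (v ∘ Sum.inl) (v ∘ Sum.inr)}
              = {v | (Lit.lt (fun i => f₁ i - f₂ i) (c₂ - c₁) : Lit F M _).Sem Q v} := by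
            ext v
            rw [Set.mem_setOf_eq, Set.mem_setOf_eq, aff_lt_sem (p := (f₁, c₁)) (q := (f₂, c₂))]
            show ((ts 0).realize (Sum.elim (v ∘ Sum.inl) (v ∘ Sum.inr))
              < (ts 1).realize (Sum.elim (v ∘ Sum.inl) (v ∘ Sum.inr))) ↔ _
            rw [Sum.elim_comp_inl_inr, h₁ v, h₂ v]
            rfl
          rw [this]; exact rep_lit _
        | q =>
          obtain ⟨f₁, c₁, h₁⟩ := hterm _ (ts 0)
          have : {v : (Fin k ⊕ Fin _) → M |
              BoundedFormula.Realize (BoundedFormula.rel (Sum.inl LPRel.q) ts)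
                (v ∘ Sum.inl) (v ∘ Sum.inr)}
              = {v | (Lit.qq f₁ (-c₁) : Lit F M _).Sem Q v} := by
            ext v
            rw [Set.mem_setOf_eq, Set.mem_setOf_eq]
            show ((ts 0).realize (Sum.elim (v ∘ Sum.inl) (v ∘ Sum.inr)) ∈ (Q : Set M)) ↔ _
            rw [Sum.elim_comp_inl_inr, h₁ v]
            show (∑ i, f₁ i • v i + c₁ ∈ Q) ↔ (∑ i, f₁ i • v i - (-c₁) ∈ Q)
            rw [sub_neg_eq_add]
          rw [this]; exact rep_lit _
      · exact isEmptyElim r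
    | imp φ₁ φ₂ ih₁ ih₂ =>
      have : {v : (Fin k ⊕ Fin _) → M |
          BoundedFormula.Realize (φ₁.imp φ₂) (v ∘ Sum.inl) (v ∘ Sum.inr)}
          = {v | φ₁.Realize (v ∘ Sum.inl) (v ∘ Sum.inr)}ᶜ
            ∪ {v | φ₂.Realize (v ∘ Sum.inl) (v ∘ Sum.inr)} := by
        ext v
        simp only [Set.mem_setOf_eq, Set.mem_union, Set.mem_compl_iff,
          BoundedFormula.realize_imp]
        exact imp_iff_not_or
      rw [this]
      exact ih₁.compl.union ih₂
    | @all n ψ ih =>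
      have hX : Rep Q {u : Option (Fin k ⊕ Fin n) → M |
          (fun s => u ((optEquiv k n).symm s))
            ∈ {w : (Fin k ⊕ Fin (n+1)) → M | ψ.Realize (w ∘ Sum.inl) (w ∘ Sum.inr)}} :=
        Rep.reindex (optEquiv k n) ih
      have h2 := Rep.forallY C hX
      have : {v : (Fin k ⊕ Fin n) → M |
          BoundedFormula.Realize ψ.all (v ∘ Sum.inl) (v ∘ Sum.inr)}
          = {v | ∀ y, extendO v y ∈ {u : Option (Fin k ⊕ Fin n) → M |
              (fun s => u ((optEquiv k n).symm s))
                ∈ {w : (Fin k ⊕ Fin (n+1)) → M | ψ.Realize (w ∘ Sum.inl) (w ∘ Sum.inr)}}} := by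
        ext v
        rw [Set.mem_setOf_eq, Set.mem_setOf_eq, BoundedFormula.realize_all]
        refine forall_congr' fun a => ?_
        rw [Set.mem_setOf_eq, Set.mem_setOf_eq]
        have hw1 : (fun s => extendO v a ((optEquiv k n).symm s)) ∘ Sum.inl = v ∘ Sum.inl := by
          funext i
          rfl
        have hw2 : (fun s => extendO v a ((optEquiv k n).symm s)) ∘ Sum.inr
            = Fin.snoc (v ∘ Sum.inr) a := by
          funext j
          refine Fin.lastCases ?_ ?_ j
          · show extendO v a ((optEquiv k n).symm (Sum.inr (Fin.last n))) = _
            rw [Fin.snoc_last]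
            simp [optEquiv]
          · intro j'
            show extendO v a ((optEquiv k n).symm (Sum.inr (Fin.castSucc j'))) = _
            rw [Fin.snoc_castSucc]
            simp [optEquiv]
        rw [hw1, hw2]
      rw [this]
      exact h2
  -- conclude
  have h0 := hform 0 φ
  have h1 := Rep.reindex (κ := Fin k ⊕ Fin 0) (Equiv.sumEmpty (Fin k) (Fin 0)).symm h0
  convert h1 using 1
  ext u
  rw [Set.mem_setOf_eq, Set.mem_setOf_eq]
  have hgl : ∀ xs : Fin 0 → M, BoundedFormula.Realize φ (fun i => u i) xs ↔ φ.Realize u := by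
    intro xs
    unfold Formula.Realize
    rw [Subsingleton.elim xs default]
  exact (hgl _).symm

end Forms

section OneVar

variable {Q : Submodule F M}

/-- The one-variable valuation. -/
def pt (x : M) : Fin 1 → M := fun _ => x

lemma sum1 (f : Fin 1 → F) (x : M) : ∑ i, f i • (pt x) i = f 0 • x := by
  simp [pt]

/-- Is the literal an order (rather than coset) literal? -/
def Lit.ordB : Lit F M (Fin 1) → Bool
  | .lt _ _ => true
  | .eq _ _ => true
  | _ => false

/-- The order-part of a clause in one variable. -/
def conv (Q : Submodule F M) (cl : Clause F M (Fin 1)) : Set M :=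
  {x | ∀ l ∈ cl, l.ordB = true → l.Sem Q (pt x)}

/-- The coset-part of a clause in one variable. -/
def combo (Q : Submodule F M) (cl : Clause F M (Fin 1)) : Set M :=
  {x | ∀ l ∈ cl, l.ordB = false → l.Sem Q (pt x)}

lemma clause_eq_conv_combo (cl : Clause F M (Fin 1)) (x : M) :
    cSem Q cl (pt x) ↔ x ∈ conv Q cl ∧ x ∈ combo Q cl := by
  constructor
  · exact fun h => ⟨fun l hl _ => h l hl, fun l hl _ => h l hl⟩
  · rintro ⟨h1, h2⟩ l hl
    rcases hb : l.ordB with _ | _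
    · exact h2 l hl hb
    · exact h1 l hl hb

/-- Thresholds of a literal. -/
def Lit.thr : Lit F M (Fin 1) → List M
  | .lt f m => if f 0 = 0 then [] else [(f 0)⁻¹ • m]
  | .eq f m => if f 0 = 0 then [] else [(f 0)⁻¹ • m]
  | _ => []

/-- Thresholds of a clause. -/
def thrC (cl : Clause F M (Fin 1)) : List M := cl.flatMap Lit.thr

/-- Thresholds of a DNF. -/
def thrD (d : DNF F M (Fin 1)) : List M := d.flatMap thrC

lemma conv_const (C : Ctx F M Q) {cl : Clause F M (Fin 1)} {u v' : M}
    (hE : ∀ e ∈ thrC cl, e ∉ Set.Ioo u v') {y z : M} (hy : y ∈ Set.Ioo u v')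
    (hz : z ∈ Set.Ioo u v') (h : y ∈ conv Q cl) : z ∈ conv Q cl := by
  intro l hl hord
  have hsem := h l hl hord
  have hEl : ∀ e ∈ l.thr, e ∉ Set.Ioo u v' := fun e he =>
    hE e (List.mem_flatMap.2 ⟨l, hl, he⟩)
  cases l with
  | lt f m =>
    simp only [Lit.Sem, sum1] at hsem ⊢
    by_cases h0 : f 0 = 0
    · rwa [h0, zero_smul] at hsem ⊢
    · have hth : (f 0)⁻¹ • m ∉ Set.Ioo u v' := hEl _ (by simp [Lit.thr, h0])
      rcases lt_trichotomy (f 0) 0 with hneg | h0' | hpos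
      · rw [C.smul_lt_iff_neg hneg] at hsem ⊢
        by_contra hcon
        push_neg at hcon
        exact hth ⟨lt_of_lt_of_le hz.1 hcon, hsem.trans hy.2⟩
      · exact absurd h0' h0
      · rw [C.smul_lt_iff hpos] at hsem ⊢
        by_contra hcon
        push_neg at hcon
        exact hth ⟨hy.1.trans hsem, lt_of_le_of_lt hcon hz.2⟩
  | eq f m =>
    simp only [Lit.Sem, sum1] at hsem ⊢
    by_cases h0 : f 0 = 0
    · rwa [h0, zero_smul] at hsem ⊢
    · have hth : (f 0)⁻¹ • m ∉ Set.Ioo u v' := hEl _ (by simp [Lit.thr, h0])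
      rw [smul_eq_iff' h0] at hsem
      exact absurd (hsem ▸ hy) hth
  | qq f m => simp [Lit.ordB] at hord
  | nq f m => simp [Lit.ordB] at hord

/-- A set is "nice" if it is a finite union of cosets of `Q` or the complement of one. -/
def Nice (Q : Submodule F M) (D : Set M) : Prop :=
  ∃ CC : Finset M, D = cosetUnion M ↑Q CC ∨ D = (cosetUnion M ↑Q CC)ᶜ

lemma mem_cosetUnion {x : M} {CC : Finset M} :
    x ∈ cosetUnion M ↑Q CC ↔ ∃ c ∈ CC, x - c ∈ Q := by
  simp [cosetUnion]

lemma cu_sat {CC : Finset M} {x y : M} (hxy : x - y ∈ Q) :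
    x ∈ cosetUnion M ↑Q CC ↔ y ∈ cosetUnion M ↑Q CC := by
  simp only [mem_cosetUnion]
  constructor
  · rintro ⟨c, hc, hxc⟩
    refine ⟨c, hc, ?_⟩
    have h2 := Q.sub_mem hxc hxy
    rwa [sub_sub_sub_cancel_left] at h2
  · rintro ⟨c, hc, hyc⟩
    refine ⟨c, hc, ?_⟩
    have h2 := Q.add_mem hxy hyc
    rwa [sub_add_sub_cancel] at h2

lemma Nice.sat {D : Set M} (h : Nice Q D) {x y : M} (hxy : x - y ∈ Q) : x ∈ D ↔ y ∈ D := by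
  obtain ⟨CC, rfl | rfl⟩ := h
  · exact cu_sat hxy
  · simp only [Set.mem_compl_iff]
    exact not_congr (cu_sat hxy)

lemma nice_empty : Nice Q (∅ : Set M) := ⟨∅, Or.inl (by simp [cosetUnion])⟩

lemma nice_univ : Nice Q (Set.univ : Set M) :=
  ⟨∅, Or.inr (by simp [cosetUnion])⟩

lemma nice_coset (c : M) : Nice Q {x : M | x - c ∈ Q} :=
  ⟨{c}, Or.inl (by ext x; simp [cosetUnion])⟩

lemma nice_cosetC (c : M) : Nice Q {x : M | x - c ∈ Q}ᶜ :=
  ⟨{c}, Or.inr (by ext x; simp [cosetUnion])⟩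

lemma Nice.compl {D : Set M} (h : Nice Q D) : Nice Q Dᶜ := by
  obtain ⟨CC, rfl | rfl⟩ := h
  · exact ⟨CC, Or.inr rfl⟩
  · exact ⟨CC, Or.inl (compl_compl _)⟩

lemma cu_union (C1 C2 : Finset M) :
    cosetUnion M ↑Q (C1 ∪ C2) = cosetUnion M ↑Q C1 ∪ cosetUnion M ↑Q C2 := by
  ext x
  simp only [mem_cosetUnion, Set.mem_union, Finset.mem_union]
  constructor
  · rintro ⟨c, hc | hc, hxc⟩
    · exact Or.inl ⟨c, hc, hxc⟩
    · exact Or.inr ⟨c, hc, hxc⟩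
  · rintro (⟨c, hc, hxc⟩ | ⟨c, hc, hxc⟩)
    · exact ⟨c, Or.inl hc, hxc⟩
    · exact ⟨c, Or.inr hc, hxc⟩

open scoped Classical in
lemma cu_inter (C1 C2 : Finset M) :
    cosetUnion M ↑Q C1 ∩ cosetUnion M ↑Q C2
      = cosetUnion M ↑Q (C1.filter fun c => ∃ c' ∈ C2, c - c' ∈ Q) := by
  classical
  ext x
  simp only [Set.mem_inter_iff, mem_cosetUnion, Finset.mem_filter]
  constructor
  · rintro ⟨⟨c1, h1, hx1⟩, ⟨c2, h2, hx2⟩⟩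
    refine ⟨c1, ⟨h1, c2, h2, ?_⟩, hx1⟩
    have h3 := Q.sub_mem hx2 hx1
    rwa [sub_sub_sub_cancel_left] at h3
  · rintro ⟨c, ⟨hc1, c', hc', hcc'⟩, hx⟩
    refine ⟨⟨c, hc1, hx⟩, c', hc', ?_⟩
    have h3 := Q.add_mem hx hcc'
    rwa [sub_add_sub_cancel] at h3

open scoped Classical in
lemma cu_diff (C1 C2 : Finset M) :
    cosetUnion M ↑Q C1 ∩ (cosetUnion M ↑Q C2)ᶜ
      = cosetUnion M ↑Q (C1.filter fun c => ∀ c' ∈ C2, c - c' ∉ Q) := by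
  classical
  ext x
  simp only [Set.mem_inter_iff, Set.mem_compl_iff, mem_cosetUnion, Finset.mem_filter]
  constructor
  · rintro ⟨⟨c1, h1, hx1⟩, hn⟩
    refine ⟨c1, ⟨h1, fun c' hc' hcc' => hn ⟨c', hc', ?_⟩⟩, hx1⟩
    have h3 := Q.add_mem hx1 hcc'
    rwa [sub_add_sub_cancel] at h3
  · rintro ⟨c, ⟨hc1, hall⟩, hx⟩
    refine ⟨⟨c, hc1, hx⟩, ?_⟩
    rintro ⟨c', hc', hx'⟩
    refine hall c' hc' ?_
    have h3 := Q.sub_mem hx' hx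
    rwa [sub_sub_sub_cancel_left] at h3

lemma Nice.inter {D₁ D₂ : Set M} (h₁ : Nice Q D₁) (h₂ : Nice Q D₂) : Nice Q (D₁ ∩ D₂) := by
  classical
  obtain ⟨C1, rfl | rfl⟩ := h₁ <;> obtain ⟨C2, rfl | rfl⟩ := h₂
  · exact ⟨_, Or.inl (cu_inter C1 C2)⟩
  · exact ⟨_, Or.inl (cu_diff C1 C2)⟩
  · rw [Set.inter_comm]
    exact ⟨_, Or.inl (cu_diff C2 C1)⟩
  · refine ⟨C1 ∪ C2, Or.inr ?_⟩
    rw [cu_union, Set.compl_union]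

lemma Nice.union {D₁ D₂ : Set M} (h₁ : Nice Q D₁) (h₂ : Nice Q D₂) : Nice Q (D₁ ∪ D₂) := by
  have h := (h₁.compl.inter h₂.compl).compl
  rwa [Set.compl_inter, _root_.compl_compl, _root_.compl_compl] at h

lemma combo_nice (cl : Clause F M (Fin 1)) : Nice Q (combo Q cl) := by
  induction cl with
  | nil =>
    have : combo Q ([] : Clause F M (Fin 1)) = Set.univ := by
      ext x; simp [combo]
    rw [this]; exact nice_univ
  | cons l cl ih =>
    have hsplit : combo Q (l :: cl)
        = {x : M | l.ordB = false → l.Sem Q (pt x)} ∩ combo Q cl := by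
      ext x
      simp only [combo, Set.mem_inter_iff, Set.mem_setOf_eq, List.mem_cons]
      constructor
      · exact fun h => ⟨fun hb => h l (Or.inl rfl) hb, fun l' hl' hb => h l' (Or.inr hl') hb⟩
      · rintro ⟨h1, h2⟩ l' (rfl | hl') hb
        · exact h1 hb
        · exact h2 l' hl' hb
    rw [hsplit]
    cases l with
    | lt f m =>
      have h1 : {x : M | (Lit.lt f m : Lit F M (Fin 1)).ordB = false
          → (Lit.lt f m : Lit F M (Fin 1)).Sem Q (pt x)} = Set.univ := by
        ext x; simp [Lit.ordB]
      rw [h1]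
      exact nice_univ.inter ih
    | eq f m =>
      have h1 : {x : M | (Lit.eq f m : Lit F M (Fin 1)).ordB = false
          → (Lit.eq f m : Lit F M (Fin 1)).Sem Q (pt x)} = Set.univ := by
        ext x; simp [Lit.ordB]
      rw [h1]
      exact nice_univ.inter ih
    | qq f m =>
      have h1 : {x : M | (Lit.qq f m : Lit F M (Fin 1)).ordB = false
          → (Lit.qq f m : Lit F M (Fin 1)).Sem Q (pt x)} = {x : M | f 0 • x - m ∈ Q} := by
        ext x; simp [Lit.ordB, Lit.Sem, pt]
      rw [h1]
      by_cases h0 : f 0 = 0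
      · by_cases hm : m ∈ Q
        · have h2 : {x : M | f 0 • x - m ∈ Q} = Set.univ := by
            ext x; simp [h0, hm]
          rw [h2]
          exact nice_univ.inter ih
        · have h2 : {x : M | f 0 • x - m ∈ Q} = ∅ := by
            ext x; simp [h0, hm]
          rw [h2]
          exact nice_empty.inter ih
      · have h2 : {x : M | f 0 • x - m ∈ Q} = {x : M | x - (f 0)⁻¹ • m ∈ Q} := by
          ext x; exact smul_mem_iff' h0
        rw [h2]
        exact (nice_coset _).inter ih
    | nq f m =>
      have h1 : {x : M | (Lit.nq f m : Lit F M (Fin 1)).ordB = false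
          → (Lit.nq f m : Lit F M (Fin 1)).Sem Q (pt x)} = {x : M | f 0 • x - m ∈ Q}ᶜ := by
        ext x; simp [Lit.ordB, Lit.Sem, pt]
      rw [h1]
      by_cases h0 : f 0 = 0
      · by_cases hm : m ∈ Q
        · have h2 : ({x : M | f 0 • x - m ∈ Q} : Set M)ᶜ = ∅ := by
            ext x; simp [h0, hm]
          rw [h2]
          exact nice_empty.inter ih
        · have h2 : ({x : M | f 0 • x - m ∈ Q} : Set M)ᶜ = Set.univ := by
            ext x; simp [h0, hm]
          rw [h2]
          exact nice_univ.inter ih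
      · have h2 : ({x : M | f 0 • x - m ∈ Q} : Set M)ᶜ = {x : M | x - (f 0)⁻¹ • m ∈ Q}ᶜ := by
          ext x
          exact not_congr (smul_mem_iff' h0)
        rw [h2]
        exact (nice_cosetC _).inter ih

/-- Union of the coset parts of a list of clauses. -/
def DJ (Q : Submodule F M) (J : List (Clause F M (Fin 1))) : Set M :=
  {x | ∃ cl ∈ J, x ∈ combo Q cl}

lemma DJ_nice (J : List (Clause F M (Fin 1))) : Nice Q (DJ Q J) := by
  induction J with
  | nil =>
    have : DJ Q ([] : List (Clause F M (Fin 1))) = ∅ := by ext x; simp [DJ]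
    rw [this]; exact nice_empty
  | cons cl J ih =>
    have : DJ Q (cl :: J) = combo Q cl ∪ DJ Q J := by
      ext x
      simp only [DJ, Set.mem_setOf_eq, Set.mem_union, List.mem_cons]
      constructor
      · rintro ⟨c, (rfl | hc), hx⟩
        · exact Or.inl hx
        · exact Or.inr ⟨c, hc, hx⟩
      · rintro (hx | ⟨c, hc, hx⟩)
        · exact ⟨cl, Or.inl rfl, hx⟩
        · exact ⟨c, Or.inr hc, hx⟩
    rw [this]
    exact (combo_nice cl).union ih

open Classical in
lemma local_eq (C : Ctx F M Q) (d : DNF F M (Fin 1)) {u v' : M}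
    (hE : ∀ e ∈ thrD d, e ∉ Set.Ioo u v') {y : M} (hy : y ∈ Set.Ioo u v') :
    dSem Q d (pt y) ↔ y ∈ DJ Q (d.filter (fun cl => decide (Set.Ioo u v' ⊆ conv Q cl))) := by
  constructor
  · rintro ⟨cl, hcl, hsem⟩
    obtain ⟨hconv, hcombo⟩ := (clause_eq_conv_combo cl y).1 hsem
    refine ⟨cl, List.mem_filter.2 ⟨hcl, decide_eq_true ?_⟩, hcombo⟩
    intro z hz
    exact conv_const C (fun e he => hE e (List.mem_flatMap.2 ⟨cl, hcl, he⟩)) hy hz hconv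
  · rintro ⟨cl, hclf, hcombo⟩
    obtain ⟨hcl, hconv⟩ := List.mem_filter.1 hclf
    have hsub : Set.Ioo u v' ⊆ conv Q cl := of_decide_eq_true hconv
    exact ⟨cl, hcl, (clause_eq_conv_combo cl y).2 ⟨hsub hy, hcombo⟩⟩

lemma sat_agree (C : Ctx F M Q) {D₁ D₂ : Set M} (h₁ : Nice Q D₁) (h₂ : Nice Q D₂)
    {u v' : M} (huv : u < v') (hagree : ∀ y ∈ Set.Ioo u v', (y ∈ D₁ ↔ y ∈ D₂)) :
    D₁ = D₂ := by
  ext x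
  obtain ⟨y, hy1, hy2, hyQ⟩ := C.cosetDense x u v' huv
  have hxy : x - y ∈ Q := by
    have := Q.neg_mem hyQ
    rwa [neg_sub] at this
  rw [h₁.sat hxy, h₂.sat hxy]
  exact hagree y ⟨hy1, hy2⟩

lemma avoid_list (C : Ctx F M Q) (E : List M) {u v' : M} (h : u < v') :
    ∃ u₁ v₁ : M, u ≤ u₁ ∧ v₁ ≤ v' ∧ u₁ < v₁ ∧ ∀ e ∈ E, e ∉ Set.Ioo u₁ v₁ := by
  induction E with
  | nil => exact ⟨u, v', le_rfl, le_rfl, h, by simp⟩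
  | cons e E ih =>
    obtain ⟨u₁, v₁, hu, hv, h1, hE⟩ := ih
    by_cases he : e ∈ Set.Ioo u₁ v₁
    · obtain ⟨q, _, hq1, hq2⟩ := C.hQdense u₁ e he.1
      refine ⟨u₁, q, hu, ((hq2.trans he.2).le).trans hv, hq1, ?_⟩
      intro e' he'
      rcases List.mem_cons.1 he' with rfl | he'
      · exact fun hmem => absurd hmem.2 (not_lt.2 hq2.le)
      · exact fun hmem => hE e' he' ⟨hmem.1, hmem.2.trans (hq2.trans he.2)⟩
    · refine ⟨u₁, v₁, hu, hv, h1, ?_⟩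
      intro e' he'
      rcases List.mem_cons.1 he' with rfl | he'
      · exact he
      · exact hE e' he'

end OneVar

section MainEq

variable {Q : Submodule F M}

lemma toExt_lt_toExt {y z : M} : toExt M y < toExt M z ↔ y < z := by
  unfold toExt
  rw [WithBot.coe_lt_coe, WithTop.coe_lt_coe]

lemma bot_lt_toExt (z : M) : (⊥ : WithBot (WithTop M)) < toExt M z := WithBot.bot_lt_coe _

lemma toExt_lt_topE (z : M) :
    toExt M z < ((⊤ : WithTop M) : WithBot (WithTop M)) := by
  unfold toExt
  rw [WithBot.coe_lt_coe]
  exact WithTop.coe_lt_top z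

lemma not_topE_lt_toExt (z : M) :
    ¬ (((⊤ : WithTop M) : WithBot (WithTop M)) < toExt M z) := by
  intro h
  unfold toExt at h
  rw [WithBot.coe_lt_coe] at h
  exact not_top_lt h

lemma mem_extIoo {z : M} {a b : WithBot (WithTop M)} :
    z ∈ extIoo M a b ↔ a < toExt M z ∧ toExt M z < b := Iff.rfl

lemma real_bounds {a b : WithBot (WithTop M)} {t x ε : M}
    (hta : a < toExt M t) (htb : toExt M t < b) (htl : x - ε < t) (htr : t < x + ε) :
    ∃ u v' : M, u < t ∧ t < v' ∧
      ∀ z : M, u < z → z < v' → z ∈ Set.Ioo (x - ε) (x + ε) ∧ z ∈ extIoo M a b := by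
  have hlow : ∃ u : M, u < t ∧ ∀ z : M, u < z → (x - ε < z ∧ a < toExt M z) := by
    induction a using WithBot.recBotCoe with
    | bot => exact ⟨x - ε, htl, fun z hz => ⟨hz, bot_lt_toExt z⟩⟩
    | coe a' =>
      induction a' using WithTop.recTopCoe with
      | top => exact absurd hta (not_topE_lt_toExt t)
      | coe a₀ =>
        have ha₀ : a₀ < t := toExt_lt_toExt.1 hta
        refine ⟨max (x - ε) a₀, max_lt htl ha₀, fun z hz => ?_⟩
        exact ⟨lt_of_le_of_lt (le_max_left _ _) hz,
          toExt_lt_toExt.2 (lt_of_le_of_lt (le_max_right _ _) hz)⟩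
  have hupp : ∃ v' : M, t < v' ∧ ∀ z : M, z < v' → (z < x + ε ∧ toExt M z < b) := by
    induction b using WithBot.recBotCoe with
    | bot => exact absurd htb (not_lt_bot)
    | coe b' =>
      induction b' using WithTop.recTopCoe with
      | top => exact ⟨x + ε, htr, fun z hz => ⟨hz, toExt_lt_topE z⟩⟩
      | coe b₀ =>
        have hb₀ : t < b₀ := toExt_lt_toExt.1 htb
        refine ⟨min (x + ε) b₀, lt_min htr hb₀, fun z hz => ?_⟩
        exact ⟨lt_of_lt_of_le hz (min_le_left _ _),
          toExt_lt_toExt.2 (lt_of_lt_of_le hz (min_le_right _ _))⟩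
  obtain ⟨u, hu, hul⟩ := hlow
  obtain ⟨v', hv', hvu⟩ := hupp
  refine ⟨u, v', hu, hv', fun z hz1 hz2 => ?_⟩
  obtain ⟨hz3, hz4⟩ := hul z hz1
  obtain ⟨hz5, hz6⟩ := hvu z hz2
  exact ⟨⟨hz3, hz5⟩, hz4, hz6⟩

/-- The set of points near which `S` agrees with an interval intersected with `D`. -/
def PsiSet (Q : Submodule F M) (S D : Set M) : Set M :=
  {x | ∃ ε : M, 0 < ε ∧ (Set.Ioo (x - ε) (x + ε) ∩ S).Nonempty ∧
    ∃ a b : WithBot (WithTop M), a < b ∧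
      Set.Ioo (x - ε) (x + ε) ∩ S = extIoo M a b ∩ D}

theorem nop_eq (C : Ctx F M Q) (S : Set M) (d : DNF F M (Fin 1))
    (hd : ∀ x : M, x ∈ S ↔ dSem Q d (pt x)) :
    nearOpenPart M ↑Q S = {x | ∃ J ∈ d.sublists, x ∈ PsiSet Q S (DJ Q J)} := by
  classical
  ext x
  simp only [nearOpenPart, NearInterval, Set.mem_setOf_eq]
  constructor
  · rintro ⟨ε, hε, hTne, a, b, CC, hab, hforms⟩
    obtain ⟨Dsat, hNice, hTD⟩ : ∃ Dsat : Set M, Nice Q Dsat ∧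
        Set.Ioo (x - ε) (x + ε) ∩ S = extIoo M a b ∩ Dsat := by
      rcases hforms with h | h
      · exact ⟨cosetUnion M ↑Q CC, ⟨CC, Or.inl rfl⟩, h⟩
      · exact ⟨(cosetUnion M ↑Q CC)ᶜ, ⟨CC, Or.inr rfl⟩, by rw [h, Set.diff_eq]⟩
    obtain ⟨t, htT⟩ := hTne
    have htw : t ∈ Set.Ioo (x - ε) (x + ε) := htT.1
    have htE : t ∈ extIoo M a b := by
      have h2 := htT
      rw [hTD] at h2
      exact h2.1
    obtain ⟨u, v', hut, htv, hzz⟩ := real_bounds htE.1 htE.2 htw.1 htw.2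
    obtain ⟨u₁, v₁, hu1, hv1, h11, hEav⟩ := avoid_list C (thrD d) (hut.trans htv)
    have hsub : ∀ z ∈ Set.Ioo u₁ v₁, z ∈ Set.Ioo (x - ε) (x + ε) ∧ z ∈ extIoo M a b :=
      fun z hz => hzz z (lt_of_le_of_lt hu1 hz.1) (lt_of_lt_of_le hz.2 hv1)
    have hDJ : Dsat = DJ Q (d.filter (fun cl => decide (Set.Ioo u₁ v₁ ⊆ conv Q cl))) := by
      refine sat_agree C hNice (DJ_nice _) h11 ?_
      intro y hy
      obtain ⟨hyw, hyE⟩ := hsub y hy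
      have h1 : y ∈ Dsat ↔ y ∈ Set.Ioo (x - ε) (x + ε) ∩ S := by
        rw [hTD]
        simp only [Set.mem_inter_iff, hyE, true_and]
      have h2 : (y ∈ Set.Ioo (x - ε) (x + ε) ∩ S) ↔ y ∈ S := by
        simp only [Set.mem_inter_iff, hyw, true_and]
      rw [h1, h2, hd y]
      exact local_eq C d hEav hy
    refine ⟨d.filter (fun cl => decide (Set.Ioo u₁ v₁ ⊆ conv Q cl)),
      List.mem_sublists.2 (List.filter_sublist (l := d)), ε, hε, ⟨t, htT⟩, a, b, hab, ?_⟩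
    rw [← hDJ]
    exact hTD
  · rintro ⟨J, hJ, ε, hε, hTne, a, b, hab, hTD⟩
    refine ⟨ε, hε, hTne, a, b, ?_⟩
    obtain ⟨CC, hD | hD⟩ := DJ_nice (Q := Q) J
    · exact ⟨CC, hab, Or.inl (by rw [hTD, hD])⟩
    · exact ⟨CC, hab, Or.inr (by rw [hTD, hD, Set.diff_eq])⟩

lemma psi_shape (S D : Set M) :
    PsiSet Q S D =
      {x | ∃ ε : M, 0 < ε ∧ (∃ w, (x - ε < w ∧ w < x + ε ∧ w ∈ S)) ∧
        ((∃ a b' : M, a < b' ∧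
            ∀ y, ((x - ε < y ∧ y < x + ε ∧ y ∈ S) ↔ (a < y ∧ y < b' ∧ y ∈ D)))
        ∨ (∃ b' : M, ∀ y, ((x - ε < y ∧ y < x + ε ∧ y ∈ S) ↔ (y < b' ∧ y ∈ D)))
        ∨ (∃ a : M, ∀ y, ((x - ε < y ∧ y < x + ε ∧ y ∈ S) ↔ (a < y ∧ y ∈ D)))
        ∨ (∀ y, ((x - ε < y ∧ y < x + ε ∧ y ∈ S) ↔ y ∈ D)))} := by
  ext x
  simp only [PsiSet, Set.mem_setOf_eq]
  refine exists_congr fun ε => and_congr_right fun hε => ?_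
  have hne : (Set.Ioo (x - ε) (x + ε) ∩ S).Nonempty
      ↔ ∃ w, (x - ε < w ∧ w < x + ε ∧ w ∈ S) := by
    constructor
    · rintro ⟨w, ⟨h1, h2⟩, h3⟩; exact ⟨w, h1, h2, h3⟩
    · rintro ⟨w, h1, h2, h3⟩; exact ⟨w, ⟨h1, h2⟩, h3⟩
  constructor
  · rintro ⟨hne', a, b, hab, hTD⟩
    refine ⟨hne.1 hne', ?_⟩
    obtain ⟨t, htT⟩ := hne'
    have htE : t ∈ extIoo M a b := by
      have h2 := htT
      rw [hTD] at h2
      exact h2.1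
    have hpt : ∀ y, ((x - ε < y ∧ y < x + ε ∧ y ∈ S)
        ↔ (a < toExt M y ∧ toExt M y < b ∧ y ∈ D)) := by
      intro y
      have h3 := Set.ext_iff.1 hTD y
      simpa [Set.mem_inter_iff, Set.mem_Ioo, mem_extIoo, and_assoc] using h3
    clear hTD htT
    revert hab htE hpt
    induction a using WithBot.recBotCoe with
    | bot =>
      intro hab htE hpt
      revert hab htE hpt
      induction b using WithBot.recBotCoe with
      | bot =>
        intro hab _ _
        exact absurd hab (lt_irrefl _)
      | coe b' =>
        induction b' using WithTop.recTopCoe with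
        | top =>
          intro _ _ hpt
          refine Or.inr (Or.inr (Or.inr fun y => ?_))
          rw [hpt y]
          constructor
          · rintro ⟨_, _, hD⟩; exact hD
          · intro hD; exact ⟨bot_lt_toExt y, toExt_lt_topE y, hD⟩
        | coe b₀ =>
          intro _ _ hpt
          refine Or.inr (Or.inl ⟨b₀, fun y => ?_⟩)
          rw [hpt y]
          constructor
          · rintro ⟨_, h2, hD⟩; exact ⟨toExt_lt_toExt.1 h2, hD⟩
          · rintro ⟨h2, hD⟩; exact ⟨bot_lt_toExt y, toExt_lt_toExt.2 h2, hD⟩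
    | coe a' =>
      induction a' using WithTop.recTopCoe with
      | top =>
        intro _ htE _
        exact absurd htE.1 (not_topE_lt_toExt t)
      | coe a₀ =>
        intro hab htE hpt
        revert hab htE hpt
        induction b using WithBot.recBotCoe with
        | bot =>
          intro _ htE _
          exact absurd htE.2 (not_lt_bot)
        | coe b' =>
          induction b' using WithTop.recTopCoe with
          | top =>
            intro _ _ hpt
            refine Or.inr (Or.inr (Or.inl ⟨a₀, fun y => ?_⟩))
            rw [hpt y]
            constructor
            · rintro ⟨h1, _, hD⟩; exact ⟨toExt_lt_toExt.1 h1, hD⟩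
            · rintro ⟨h1, hD⟩; exact ⟨toExt_lt_toExt.2 h1, toExt_lt_topE y, hD⟩
          | coe b₀ =>
            intro hab _ hpt
            refine Or.inl ⟨a₀, b₀, toExt_lt_toExt.1 hab, fun y => ?_⟩
            rw [hpt y]
            constructor
            · rintro ⟨h1, h2, hD⟩; exact ⟨toExt_lt_toExt.1 h1, toExt_lt_toExt.1 h2, hD⟩
            · rintro ⟨h1, h2, hD⟩; exact ⟨toExt_lt_toExt.2 h1, toExt_lt_toExt.2 h2, hD⟩
  · rintro ⟨hne', hcase⟩
    refine ⟨hne.2 hne', ?_⟩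
    rcases hcase with ⟨a, b', hab, hpt⟩ | ⟨b', hpt⟩ | ⟨a, hpt⟩ | hpt
    · refine ⟨toExt M a, toExt M b', toExt_lt_toExt.2 hab, Set.ext fun y => ?_⟩
      simp only [Set.mem_inter_iff, Set.mem_Ioo, mem_extIoo, toExt_lt_toExt, and_assoc]
      exact hpt y
    · refine ⟨⊥, toExt M b', bot_lt_toExt b', Set.ext fun y => ?_⟩
      simp only [Set.mem_inter_iff, Set.mem_Ioo, mem_extIoo, toExt_lt_toExt,
        bot_lt_toExt, true_and, and_assoc]
      exact hpt y
    · refine ⟨toExt M a, ((⊤ : WithTop M) : WithBot (WithTop M)), toExt_lt_topE a,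
        Set.ext fun y => ?_⟩
      simp only [Set.mem_inter_iff, Set.mem_Ioo, mem_extIoo, toExt_lt_toExt,
        toExt_lt_topE, and_true, and_assoc]
      exact hpt y
    · refine ⟨⊥, ((⊤ : WithTop M) : WithBot (WithTop M)), WithBot.bot_lt_coe _,
        Set.ext fun y => ?_⟩
      simp only [Set.mem_inter_iff, Set.mem_Ioo, mem_extIoo, bot_lt_toExt,
        toExt_lt_topE, true_and, and_true, and_assoc]
      exact hpt y

end MainEq

section DefTools

variable (one : M) (Qs : Set M)

/-- Constant term. -/
def constT {n : ℕ} (c : M) : ((LP F)[[(Set.univ : Set M)]]).Term (Fin n) :=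
  ((LP F).con ⟨c, Set.mem_univ c⟩).term

/-- Affine term. -/
def affT {n : ℕ} (f : Fin n → F) (c : M) : ((LP F)[[(Set.univ : Set M)]]).Term (Fin n) :=
  (List.finRange n).foldr
    (fun i t => Term.func (Sum.inl LPFunc.add)
      ![Term.func (Sum.inl (LPFunc.smul (f i))) ![Term.var i], t])
    (constT c)

lemma constT_realize {n : ℕ} (c : M) (v : Fin n → M) :
    letI := LPStruc F M one Qs
    (constT (F := F) c).realize v = c := by
  letI := LPStruc F M one Qs
  exact Term.realize_con

lemma affT_realize {n : ℕ} (f : Fin n → F) (c : M) (v : Fin n → M) :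
    letI := LPStruc F M one Qs
    (affT f c).realize v = ∑ i, f i • v i + c := by
  letI := LPStruc F M one Qs
  have key : ∀ L : List (Fin n),
      (L.foldr (fun i t => Term.func (Sum.inl LPFunc.add)
        ![Term.func (Sum.inl (LPFunc.smul (f i))) ![Term.var i], t])
        (constT c)).realize v = (L.map fun i => f i • v i).sum + c := by
    intro L
    induction L with
    | nil =>
      simp only [List.foldr_nil, List.map_nil, List.sum_nil, zero_add]
      exact constT_realize one Qs c v
    | cons i L ih =>
      have h1 : ((i :: L).foldr (fun i t => Term.func (Sum.inl LPFunc.add)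
          ![Term.func (Sum.inl (LPFunc.smul (f i))) ![Term.var i], t])
          (constT c)).realize v
          = f i • v i + (L.foldr (fun i t => Term.func (Sum.inl LPFunc.add)
            ![Term.func (Sum.inl (LPFunc.smul (f i))) ![Term.var i], t])
            (constT c)).realize v := rfl
      rw [h1, ih, List.map_cons, List.sum_cons, add_assoc]
  rw [affT, key, ← Fin.sum_univ_def]

lemma PD_lt {n : ℕ} (f : Fin n → F) (c : M) :
    POVSDefinable F M one Qs {v : Fin n → M | ∑ i, f i • v i < c} := by
  letI := LPStruc F M one Qs
  refine ⟨Relations.formula (Sum.inl LPRel.lt) ![affT f 0, constT c], ?_⟩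
  ext v
  rw [Set.mem_setOf_eq, Set.mem_setOf_eq]
  refine Iff.trans ?_ Formula.realize_rel.symm
  show _ ↔ ((affT f (0 : M)).realize v < (constT (F := F) c).realize v)
  rw [affT_realize, constT_realize, add_zero]

lemma PD_qmem {n : ℕ} (f : Fin n → F) (c : M) :
    POVSDefinable F M one Qs {v : Fin n → M | ∑ i, f i • v i - c ∈ Qs} := by
  letI := LPStruc F M one Qs
  refine ⟨Relations.formula (Sum.inl LPRel.q) ![affT f (-c)], ?_⟩
  ext v
  rw [Set.mem_setOf_eq, Set.mem_setOf_eq]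
  refine Iff.trans ?_ Formula.realize_rel.symm
  show _ ↔ ((affT f (-c)).realize v ∈ Qs)
  rw [affT_realize]
  rw [sub_eq_add_neg]

variable {one : M} {Qs : Set M}

lemma PD_inter {n : ℕ} {X Y : Set (Fin n → M)} (hX : POVSDefinable F M one Qs X)
    (hY : POVSDefinable F M one Qs Y) : POVSDefinable F M one Qs (X ∩ Y) := by
  letI := LPStruc F M one Qs
  exact Set.Definable.inter hX hY

lemma PD_union {n : ℕ} {X Y : Set (Fin n → M)} (hX : POVSDefinable F M one Qs X)
    (hY : POVSDefinable F M one Qs Y) : POVSDefinable F M one Qs (X ∪ Y) := by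
  letI := LPStruc F M one Qs
  exact Set.Definable.union hX hY

lemma PD_compl {n : ℕ} {X : Set (Fin n → M)} (hX : POVSDefinable F M one Qs X) :
    POVSDefinable F M one Qs Xᶜ := by
  letI := LPStruc F M one Qs
  exact Set.Definable.compl hX

lemma PD_empty {n : ℕ} : POVSDefinable F M one Qs (∅ : Set (Fin n → M)) := by
  letI := LPStruc F M one Qs
  exact Set.definable_empty

lemma PD_biUnion {n : ℕ} {ι : Type} {f : ι → Set (Fin n → M)} (CC : Finset ι)
    (h : ∀ c, POVSDefinable F M one Qs (f c)) :
    POVSDefinable F M one Qs (⋃ c ∈ CC, f c) := by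
  letI := LPStruc F M one Qs
  exact Set.definable_biUnion_finset (fun c => h c) CC

lemma PD_listUnion {n : ℕ} {ι : Type} (l : List ι) (f : ι → Set (Fin n → M))
    (h : ∀ i ∈ l, POVSDefinable F M one Qs (f i)) :
    POVSDefinable F M one Qs {v | ∃ i ∈ l, v ∈ f i} := by
  induction l with
  | nil =>
    have he : {v : Fin n → M | ∃ i ∈ ([] : List ι), v ∈ f i} = ∅ := by
      ext v; simp
    rw [he]
    exact PD_empty
  | cons a l ih =>
    have hs : {v : Fin n → M | ∃ i ∈ a :: l, v ∈ f i}
        = f a ∪ {v | ∃ i ∈ l, v ∈ f i} := by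
      ext v
      simp only [Set.mem_setOf_eq, Set.mem_union, List.mem_cons]
      constructor
      · rintro ⟨i, (rfl | hi), hv⟩
        · exact Or.inl hv
        · exact Or.inr ⟨i, hi, hv⟩
      · rintro (hv | ⟨i, hi, hv⟩)
        · exact ⟨a, Or.inl rfl, hv⟩
        · exact ⟨i, Or.inr hi, hv⟩
    rw [hs]
    exact PD_union (h a (List.mem_cons_self)) (ih fun i hi => h i (List.mem_cons_of_mem _ hi))

lemma PD_coord {n : ℕ} {S : Set M}
    (hS : POVSDefinable F M one Qs {x! : Fin 1 → M | x! 0 ∈ S}) (i : Fin n) :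
    POVSDefinable F M one Qs {v : Fin n → M | v i ∈ S} := by
  letI := LPStruc F M one Qs
  have h := Set.Definable.preimage_comp (fun _ : Fin 1 => i) hS
  unfold POVSDefinable DefinableIn
  convert h using 1
  rfl

lemma PD_exists_last {n : ℕ} {X : Set (Fin (n + 1) → M)}
    (hX : POVSDefinable F M one Qs X) :
    POVSDefinable F M one Qs {v : Fin n → M | ∃ y, Fin.snoc v y ∈ X} := by
  letI := LPStruc F M one Qs
  have h2 := Set.Definable.image_comp hX (Fin.castSucc : Fin n → Fin (n + 1))
  unfold POVSDefinable DefinableIn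
  convert h2 using 1
  ext v
  constructor
  · rintro ⟨y, hy⟩
    exact ⟨Fin.snoc v y, hy, Fin.snoc_comp_castSucc⟩
  · rintro ⟨w, hw, rfl⟩
    refine ⟨w (Fin.last n), ?_⟩
    have h3 : Fin.snoc ((fun g : Fin (n+1) → M => g ∘ Fin.castSucc) w) (w (Fin.last n)) = w :=
      Fin.snoc_init_self w
    rw [h3]
    exact hw

lemma PD_forall_last {n : ℕ} {X : Set (Fin (n + 1) → M)}
    (hX : POVSDefinable F M one Qs X) :
    POVSDefinable F M one Qs {v : Fin n → M | ∀ y, Fin.snoc v y ∈ X} := by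
  have h := PD_compl (PD_exists_last (PD_compl hX))
  convert h using 1
  ext v
  simp

lemma PD_iff {n : ℕ} {X Y : Set (Fin n → M)} (hX : POVSDefinable F M one Qs X)
    (hY : POVSDefinable F M one Qs Y) :
    POVSDefinable F M one Qs {v | v ∈ X ↔ v ∈ Y} := by
  have h := PD_union (PD_inter hX hY) (PD_inter (PD_compl hX) (PD_compl hY))
  convert h using 1
  ext v
  simp only [Set.mem_setOf_eq, Set.mem_union, Set.mem_inter_iff, Set.mem_compl_iff]
  tauto

end DefTools

section PsiDef

lemma sum_ind1 {n : ℕ} (i : Fin n) (a : F) (v : Fin n → M) :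
    ∑ k, (if k = i then a else 0) • v k = a • v i := by
  simp [ite_smul, Finset.sum_ite_eq']

lemma sum_ind2 {n : ℕ} (i j : Fin n) (a b : F) (v : Fin n → M) :
    ∑ k, ((if k = i then a else 0) + (if k = j then b else 0)) • v k
      = a • v i + b • v j := by
  simp [add_smul, Finset.sum_add_distrib, ite_smul, Finset.sum_ite_eq']

lemma sum_ind3 {n : ℕ} (i j l : Fin n) (a b c' : F) (v : Fin n → M) :
    ∑ k, ((if k = i then a else 0) + ((if k = j then b else 0) + (if k = l then c' else 0))) • v k
      = a • v i + (b • v j + c' • v l) := by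
  simp [add_smul, Finset.sum_add_distrib, ite_smul, Finset.sum_ite_eq']

variable {Q : Submodule F M} {one : M}

lemma PD_sub_lt {n : ℕ} (i j l : Fin n) :
    POVSDefinable F M one ↑Q {v : Fin n → M | v i - v j < v l} := by
  have h := PD_lt (F := F) (M := M) one (↑Q : Set M)
    (fun k : Fin n => (if k = i then (1 : F) else 0)
      + ((if k = j then (-1 : F) else 0) + (if k = l then (-1 : F) else 0))) 0
  convert h using 1
  ext v
  rw [Set.mem_setOf_eq, Set.mem_setOf_eq, sum_ind3, one_smul, neg_one_smul, neg_one_smul]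
  have he : v i + (-(v j) + -(v l)) = (v i - v j) - v l := by abel
  rw [he, sub_lt_zero]

lemma PD_lt_add {n : ℕ} (i j l : Fin n) :
    POVSDefinable F M one ↑Q {v : Fin n → M | v i < v j + v l} := by
  have h := PD_lt (F := F) (M := M) one (↑Q : Set M)
    (fun k : Fin n => (if k = i then (1 : F) else 0)
      + ((if k = j then (-1 : F) else 0) + (if k = l then (-1 : F) else 0))) 0
  convert h using 1
  ext v
  rw [Set.mem_setOf_eq, Set.mem_setOf_eq, sum_ind3, one_smul, neg_one_smul, neg_one_smul]
  have he : v i + (-(v j) + -(v l)) = v i - (v j + v l) := by abel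
  rw [he, sub_lt_zero]

lemma PD_lt_coord {n : ℕ} (i j : Fin n) :
    POVSDefinable F M one ↑Q {v : Fin n → M | v i < v j} := by
  have h := PD_lt (F := F) (M := M) one (↑Q : Set M)
    (fun k : Fin n => (if k = i then (1 : F) else 0) + (if k = j then (-1 : F) else 0)) 0
  convert h using 1
  ext v
  rw [Set.mem_setOf_eq, Set.mem_setOf_eq, sum_ind2, one_smul, neg_one_smul]
  have he : v i + -(v j) = v i - v j := by abel
  rw [he, sub_lt_zero]

lemma PD_pos_coord {n : ℕ} (i : Fin n) :
    POVSDefinable F M one ↑Q {v : Fin n → M | 0 < v i} := by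
  have h := PD_lt (F := F) (M := M) one (↑Q : Set M)
    (fun k : Fin n => if k = i then (-1 : F) else 0) 0
  convert h using 1
  ext v
  rw [Set.mem_setOf_eq, Set.mem_setOf_eq, sum_ind1, neg_one_smul, neg_lt_zero]

lemma PD_coset_coord {n : ℕ} (i : Fin n) (c : M) :
    POVSDefinable F M one ↑Q {v : Fin n → M | v i - c ∈ (↑Q : Set M)} := by
  have h := PD_qmem (F := F) (M := M) one (↑Q : Set M)
    (fun k : Fin n => if k = i then (1 : F) else 0) c
  convert h using 1
  ext v
  rw [Set.mem_setOf_eq, Set.mem_setOf_eq, sum_ind1, one_smul]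

lemma PD_D_coord {n : ℕ} {D : Set M} (hD : Nice Q D) (i : Fin n) :
    POVSDefinable F M one ↑Q {v : Fin n → M | v i ∈ D} := by
  obtain ⟨CC, rfl | rfl⟩ := hD
  · have he : {v : Fin n → M | v i ∈ cosetUnion M ↑Q CC}
        = ⋃ c ∈ CC, {v : Fin n → M | v i - c ∈ (↑Q : Set M)} := by
      ext v
      simp [cosetUnion]
    rw [he]
    exact PD_biUnion CC (fun c => PD_coset_coord i c)
  · have he : {v : Fin n → M | v i ∈ (cosetUnion M ↑Q CC)ᶜ}
        = (⋃ c ∈ CC, {v : Fin n → M | v i - c ∈ (↑Q : Set M)})ᶜ := by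
      ext v
      simp [cosetUnion]
    rw [he]
    exact PD_compl (PD_biUnion CC (fun c => PD_coset_coord i c))

theorem psi_definable {S D : Set M}
    (hS : POVSDefinable F M one ↑Q {x! : Fin 1 → M | x! 0 ∈ S}) (hD : Nice Q D) :
    POVSDefinable F M one ↑Q {x! : Fin 1 → M | x! 0 ∈ PsiSet Q S D} := by
  classical
  -- pieces at arity 5, coordinates (x, ε, a, b, y)
  have hS5 : POVSDefinable F M one ↑Q {v : Fin 5 → M | v 4 ∈ S} := PD_coord hS 4
  have hD5 : POVSDefinable F M one ↑Q {v : Fin 5 → M | v 4 ∈ D} := PD_D_coord hD 4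
  set W5 : Set (Fin 5 → M) :=
    {v | v 0 - v 1 < v 4} ∩ ({v | v 4 < v 0 + v 1} ∩ {v | v 4 ∈ S}) with hW5def
  have hW5 : POVSDefinable F M one ↑Q W5 :=
    PD_inter (PD_sub_lt 0 1 4) (PD_inter (PD_lt_add 4 0 1) hS5)
  set R1 : Set (Fin 5 → M) := {v | v 2 < v 4} ∩ ({v | v 4 < v 3} ∩ {v | v 4 ∈ D}) with hR1def
  set R2 : Set (Fin 5 → M) := {v | v 4 < v 3} ∩ {v | v 4 ∈ D} with hR2def
  set R3 : Set (Fin 5 → M) := {v | v 2 < v 4} ∩ {v | v 4 ∈ D} with hR3def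
  set R4 : Set (Fin 5 → M) := {v | v 4 ∈ D} with hR4def
  have hR1 : POVSDefinable F M one ↑Q R1 :=
    PD_inter (PD_lt_coord 2 4) (PD_inter (PD_lt_coord 4 3) hD5)
  have hR2 : POVSDefinable F M one ↑Q R2 := PD_inter (PD_lt_coord 4 3) hD5
  have hR3 : POVSDefinable F M one ↑Q R3 := PD_inter (PD_lt_coord 2 4) hD5
  have hR4 : POVSDefinable F M one ↑Q R4 := hD5
  -- shapes at arity 4
  set Sh1 : Set (Fin 4 → M) :=
    {w | w 2 < w 3} ∩ {w | ∀ y, Fin.snoc w y ∈ {v | v ∈ W5 ↔ v ∈ R1}} with hSh1def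
  set Sh2 : Set (Fin 4 → M) :=
    {w | ∀ y, Fin.snoc w y ∈ {v | v ∈ W5 ↔ v ∈ R2}} with hSh2def
  set Sh3 : Set (Fin 4 → M) :=
    {w | ∀ y, Fin.snoc w y ∈ {v | v ∈ W5 ↔ v ∈ R3}} with hSh3def
  set Sh4 : Set (Fin 4 → M) :=
    {w | ∀ y, Fin.snoc w y ∈ {v | v ∈ W5 ↔ v ∈ R4}} with hSh4def
  have hSh1 : POVSDefinable F M one ↑Q Sh1 :=
    PD_inter (PD_lt_coord 2 3) (PD_forall_last (PD_iff hW5 hR1))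
  have hSh2 : POVSDefinable F M one ↑Q Sh2 := PD_forall_last (PD_iff hW5 hR2)
  have hSh3 : POVSDefinable F M one ↑Q Sh3 := PD_forall_last (PD_iff hW5 hR3)
  have hSh4 : POVSDefinable F M one ↑Q Sh4 := PD_forall_last (PD_iff hW5 hR4)
  set P4 : Set (Fin 4 → M) :=
    {w | 0 < w 1} ∩ ({w | ∃ y, Fin.snoc w y ∈ W5} ∩ (Sh1 ∪ (Sh2 ∪ (Sh3 ∪ Sh4)))) with hP4def
  have hP4 : POVSDefinable F M one ↑Q P4 :=
    PD_inter (PD_pos_coord 1) (PD_inter (PD_exists_last hW5)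
      (PD_union hSh1 (PD_union hSh2 (PD_union hSh3 hSh4))))
  set P3 : Set (Fin 3 → M) := {u | ∃ b, Fin.snoc u b ∈ P4} with hP3def
  set P2 : Set (Fin 2 → M) := {u | ∃ a, Fin.snoc u a ∈ P3} with hP2def
  set P1 : Set (Fin 1 → M) := {u | ∃ ε, Fin.snoc u ε ∈ P2} with hP1def
  have hP1 : POVSDefinable F M one ↑Q P1 :=
    PD_exists_last (PD_exists_last (PD_exists_last hP4))
  convert hP1 using 1
  ext x!
  rw [Set.mem_setOf_eq, psi_shape (Q := Q) S D, Set.mem_setOf_eq]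
  have hmem : x! ∈ P1 ↔ ∃ ε a b : M,
      (Fin.snoc (Fin.snoc (Fin.snoc x! ε) a) b : Fin 4 → M) ∈ P4 := by
    simp only [hP1def, hP2def, hP3def, Set.mem_setOf_eq]
  rw [hmem]
  constructor
  · rintro ⟨ε, hε, hNE, hcase⟩
    obtain ⟨w₀, hw1, hw2, hw3⟩ := hNE
    rcases hcase with ⟨a, b, hab, hpt⟩ | ⟨b, hpt⟩ | ⟨a, hpt⟩ | hpt
    · refine ⟨ε, a, b, hε, ⟨w₀, hw1, hw2, hw3⟩, Or.inl ⟨hab, fun y => ?_⟩⟩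
      exact hpt y
    · refine ⟨ε, 0, b, hε, ⟨w₀, hw1, hw2, hw3⟩, Or.inr (Or.inl fun y => ?_)⟩
      exact hpt y
    · refine ⟨ε, a, 0, hε, ⟨w₀, hw1, hw2, hw3⟩, Or.inr (Or.inr (Or.inl fun y => ?_))⟩
      exact hpt y
    · refine ⟨ε, 0, 0, hε, ⟨w₀, hw1, hw2, hw3⟩, Or.inr (Or.inr (Or.inr fun y => ?_))⟩
      exact hpt y
  · rintro ⟨ε, a, b, hε, ⟨w₀, hw1, hw2, hw3⟩, hcase⟩
    refine ⟨ε, hε, ⟨w₀, hw1, hw2, hw3⟩, ?_⟩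
    rcases hcase with ⟨hab, hpt⟩ | hpt | hpt | hpt
    · exact Or.inl ⟨a, b, hab, fun y => hpt y⟩
    · exact Or.inr (Or.inl ⟨b, fun y => hpt y⟩)
    · exact Or.inr (Or.inr (Or.inl ⟨a, fun y => hpt y⟩))
    · exact Or.inr (Or.inr (Or.inr fun y => hpt y))

end PsiDef

end NOP

/-- For every definable `S ⊆ M`, the set `S^{no}` is definable;
consequently the near-interior `S ∩ S^{no}` and the near-frontier `S \ S^{no}`
are definable. -/
theorem statement1
    (hsmul : ∀ (c : F) (x : M), 0 < c → 0 < x → 0 < c • x)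
    (one : M) (hone : 0 < one)
    (Q : Submodule F M) (hQproper : (Q : Set M) ≠ Set.univ) (honeQ : one ∈ Q)
    (hQdense : ∀ a b : M, a < b → ∃ q ∈ Q, a < q ∧ q < b)
    (S : Set M) (hS : POVSDefinable1 F M one (Q : Set M) S) :
    POVSDefinable1 F M one (Q : Set M) (nearOpenPart M (Q : Set M) S) ∧
    POVSDefinable1 F M one (Q : Set M) (S ∩ nearOpenPart M (Q : Set M) S) ∧
    POVSDefinable1 F M one (Q : Set M) (S \ nearOpenPart M (Q : Set M) S) := by
  have C : NOP.Ctx F M Q := ⟨one, hone, hQproper, hQdense, hsmul⟩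
  have hS' : POVSDefinable F M one ↑Q {x! : Fin 1 → M | x! 0 ∈ S} := hS
  obtain ⟨d, hdeq⟩ := NOP.definable_to_rep C one hS'
  have hd : ∀ x : M, x ∈ S ↔ NOP.dSem Q d (NOP.pt x) := by
    intro x
    exact Set.ext_iff.1 hdeq (NOP.pt x)
  have hnop := NOP.nop_eq C S d hd
  have hnopdef : POVSDefinable F M one ↑Q
      {x! : Fin 1 → M | x! 0 ∈ nearOpenPart M ↑Q S} := by
    rw [hnop]
    exact NOP.PD_listUnion d.sublists
      (fun J => {x! : Fin 1 → M | x! 0 ∈ NOP.PsiSet Q S (NOP.DJ Q J)})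
      (fun J _ => NOP.psi_definable hS' (NOP.DJ_nice J))
  exact ⟨hnopdef, NOP.PD_inter hS' hnopdef, NOP.PD_inter hS' (NOP.PD_compl hnopdef)⟩
end

section
/- Every definable subset of Mⁿ is a finite Boolean combination of sets of the following three forms, where t(x) = α₁x₁ + ⋯ + αₙxₙ + b ranges over affine functions with α₁,…,αₙ ∈ F and b ∈ M: {x ∈ Mⁿ : t(x) = 0}, {x ∈ Mⁿ : t(x) > 0}, and {x ∈ Mⁿ : t(x) ∈ Q}. (This is the one-sorted content of the quantifier elimination theorem for the two-sorted theory T_POVS of the pair together with its quotient F-vector space M/Q.) -/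
open FirstOrder Language Set

variable (F M : Type) [Field F] [LinearOrder F] [IsStrictOrderedRing F] [AddCommGroup M] [LinearOrder M] [IsOrderedAddMonoid M] [Module F M]

/-- Finite Boolean combinations of sets from a family `B`. -/
inductive BoolComb {α : Type} (B : Set (Set α)) : Set α → Prop
  | basic {s : Set α} : s ∈ B → BoolComb B s
  | univ : BoolComb B Set.univ
  | compl {s : Set α} : BoolComb B s → BoolComb B sᶜ
  | inter {s t : Set α} : BoolComb B s → BoolComb B t → BoolComb B (s ∩ t)

set_option linter.unusedSectionVars false
set_option linter.unusedVariables false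

namespace QEaux

variable {F M : Type} [Field F] [LinearOrder F] [IsStrictOrderedRing F] [AddCommGroup M] [LinearOrder M] [IsOrderedAddMonoid M] [Module F M]

section Order

lemma smul_lt_smul (hsmul : ∀ (c : F) (x : M), 0 < c → 0 < x → 0 < c • x) (c : F) (hc : 0 < c) {a b : M} (h : a < b) : c • a < c • b := by
  have := hsmul c (b - a) hc (sub_pos.mpr h)
  rw [smul_sub] at this
  exact sub_pos.mp this

lemma smul_lt_smul_iff (hsmul : ∀ (c : F) (x : M), 0 < c → 0 < x → 0 < c • x) (c : F) (hc : 0 < c) {a b : M} : c • a < c • b ↔ a < b := by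
  constructor
  · intro h
    have := smul_lt_smul hsmul c⁻¹ (inv_pos.mpr hc) h
    rwa [inv_smul_smul₀ hc.ne', inv_smul_smul₀ hc.ne'] at this
  · exact smul_lt_smul hsmul c hc

end Order

lemma smul_cancel_iff {c : F} (hc : c ≠ 0) {y z : M} : c • y = z ↔ y = c⁻¹ • z :=
  ⟨fun h => by rw [← h, inv_smul_smul₀ hc], fun h => by rw [h, smul_inv_smul₀ hc]⟩

lemma mem_smul_iff (Q : Submodule F M) {c : F} (hc : c ≠ 0) {z : M} :
    c • z ∈ Q ↔ z ∈ Q :=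
  ⟨fun h => by simpa [inv_smul_smul₀ hc] using Q.smul_mem c⁻¹ h, Q.smul_mem c⟩

/-- A nonempty list has a maximum element. -/
lemma list_max : ∀ (l : List M), l ≠ [] → ∃ m ∈ l, ∀ x ∈ l, x ≤ m := by
  intro l
  induction l with
  | nil => intro h; exact absurd rfl h
  | cons a t ih =>
    intro _
    rcases eq_or_ne t [] with rfl | ht
    · exact ⟨a, List.mem_singleton_self a, by simp⟩
    · obtain ⟨m, hm, hmax⟩ := ih ht
      rcases le_total a m with h | h
      · exact ⟨m, List.mem_cons_of_mem a hm, by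
          intro x hx
          rcases List.mem_cons.mp hx with rfl | hx
          · exact h
          · exact hmax x hx⟩
      · exact ⟨a, List.mem_cons_self, by
          intro x hx
          rcases List.mem_cons.mp hx with rfl | hx
          · exact le_rfl
          · exact (hmax x hx).trans h⟩

lemma list_min : ∀ (l : List M), l ≠ [] → ∃ m ∈ l, ∀ x ∈ l, m ≤ x := by
  intro l hl
  obtain ⟨m, hm, hmax⟩ := list_max (M := Mᵒᵈ) l hl
  exact ⟨m, hm, hmax⟩

/-- Any two lists with all pairs `l < u` admit `a < b` with `a` above all of `ls`
and `b` below all of `us`. -/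
lemma interval_of_pairwise (one : M) (hone : 0 < one) (ls us : List M)
    (h : ∀ l ∈ ls, ∀ u ∈ us, l < u) :
    ∃ a b : M, a < b ∧ (∀ l ∈ ls, l ≤ a) ∧ (∀ u ∈ us, b ≤ u) := by
  rcases eq_or_ne ls [] with rfl | hls
  · rcases eq_or_ne us [] with rfl | hus
    · exact ⟨0, one, hone, by simp, by simp⟩
    · obtain ⟨m, _, hmin⟩ := list_min us hus
      exact ⟨m - one, m, by simpa using hone, by simp, hmin⟩
  · obtain ⟨a, ha, hamax⟩ := list_max ls hls
    rcases eq_or_ne us [] with rfl | hus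
    · exact ⟨a, a + one, by simpa using hone, hamax, by simp⟩
    · obtain ⟨b, hb, hbmin⟩ := list_min us hus
      exact ⟨a, b, h a ha b hb, hamax, hbmin⟩

section QLemmas

variable (Q : Submodule F M)

/-- An interval cannot be covered by finitely many cosets of `Q`. -/
lemma avoid (hQproper : (Q : Set M) ≠ Set.univ)
    (hQdense : ∀ a b : M, a < b → ∃ q ∈ Q, a < q ∧ q < b) {a b : M} (hab : a < b) (ss : List M) :
    ∃ y, a < y ∧ y < b ∧ ∀ s ∈ ss, y + s ∉ Q := by
  by_contra hcon
  push_neg at hcon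
  -- every element of M lies in some coset
  have key : ∀ x : M, ∃ s ∈ ss, x + s ∈ Q := by
    intro x
    obtain ⟨q, hq, h1, h2⟩ := hQdense (a - x) (b - x) (sub_lt_sub_right hab x)
    have h1' : a < x + q := by rw [sub_lt_iff_lt_add] at h1; rwa [add_comm] at h1
    have h2' : x + q < b := by rw [lt_sub_iff_add_lt] at h2; rwa [add_comm] at h2
    obtain ⟨s, hs, hmem⟩ := hcon (x + q) h1' h2'
    refine ⟨s, hs, ?_⟩
    have := Q.sub_mem hmem hq
    have e : x + q + s - q = x + s := by abel
    rwa [e] at this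
  obtain ⟨v, hv⟩ : ∃ v, v ∉ Q := by
    by_contra hc
    push_neg at hc
    exact hQproper (Set.eq_univ_of_forall hc)
  have hf : ∀ k : Fin (ss.length + 1), ∃ i : Fin ss.length,
      ((k : ℕ) : F) • v + ss.get i ∈ Q := by
    intro k
    obtain ⟨s, hs, hmem⟩ := key (((k : ℕ) : F) • v)
    obtain ⟨i, rfl⟩ := List.mem_iff_get.mp hs
    exact ⟨i, hmem⟩
  choose f hfQ using hf
  obtain ⟨k, k', hne, heq⟩ := Fintype.exists_ne_map_eq_of_card_lt f (by simp)
  have h1 := hfQ k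
  have h2 := hfQ k'
  rw [heq] at h1
  have hd : ((((k : ℕ) : F)) - (((k' : ℕ) : F))) • v ∈ Q := by
    have := Q.sub_mem h1 h2
    rwa [add_sub_add_right_eq_sub, ← sub_smul] at this
  have hk : (((k : ℕ) : F)) - (((k' : ℕ) : F)) ≠ 0 := by
    rw [sub_ne_zero]
    exact_mod_cast fun h => hne (Fin.ext h)
  exact hv (by
    have := Q.smul_mem ((((k : ℕ) : F)) - (((k' : ℕ) : F)))⁻¹ hd
    rwa [inv_smul_smul₀ hk] at this)

/-- Existence with an equality constraint. -/
lemma ex_eq (E₀ : M) (es : List M) (P : M → Prop) :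
    (∃ y, (∀ E ∈ E₀ :: es, y = E) ∧ P y) ↔ ((∀ E ∈ E₀ :: es, E₀ = E) ∧ P E₀) := by
  constructor
  · rintro ⟨y, h1, h2⟩
    have hy : y = E₀ := h1 E₀ List.mem_cons_self
    subst hy
    exact ⟨h1, h2⟩
  · rintro ⟨h1, h2⟩
    exact ⟨E₀, h1, h2⟩

/-- Existence with `Q`-membership constraints, no equality constraints. -/
lemma ex_q (hQdense : ∀ a b : M, a < b → ∃ q ∈ Q, a < q ∧ q < b) (one : M) (hone : 0 < one) (r₀ : M) (rs ls us ss : List M) :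
    (∃ y, (∀ l ∈ ls, l < y) ∧ (∀ u ∈ us, y < u) ∧ (∀ r ∈ r₀ :: rs, y + r ∈ Q) ∧
      (∀ s ∈ ss, y + s ∉ Q)) ↔
    ((∀ l ∈ ls, ∀ u ∈ us, l < u) ∧ (∀ r ∈ r₀ :: rs, r - r₀ ∈ Q) ∧
      (∀ s ∈ ss, s - r₀ ∉ Q)) := by
  constructor
  · rintro ⟨y, hl, hu, hr, hs⟩
    refine ⟨fun l hls u hus => (hl l hls).trans (hu u hus), fun r hrs => ?_, fun s hss hmem => ?_⟩
    · have := Q.sub_mem (hr r hrs) (hr r₀ List.mem_cons_self)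
      have e : y + r - (y + r₀) = r - r₀ := by abel
      rwa [e] at this
    · apply hs s hss
      have := Q.add_mem (hr r₀ List.mem_cons_self) hmem
      have e : y + r₀ + (s - r₀) = y + s := by abel
      rwa [e] at this
  · rintro ⟨hlu, hr, hs⟩
    obtain ⟨a, b, hab, hla, hbu⟩ := interval_of_pairwise one hone ls us hlu
    obtain ⟨q, hq, hq1, hq2⟩ := hQdense (a + r₀) (b + r₀) (add_lt_add_left hab r₀)
    refine ⟨q - r₀, ?_, ?_, ?_, ?_⟩
    · intro l hls
      have : a < q - r₀ := by rw [lt_sub_iff_add_lt]; exact hq1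
      exact lt_of_le_of_lt (hla l hls) this
    · intro u hus
      have : q - r₀ < b := by rw [sub_lt_iff_lt_add]; exact hq2
      exact lt_of_lt_of_le this (hbu u hus)
    · intro r hrs
      have := Q.add_mem hq (hr r hrs)
      have e : q + (r - r₀) = q - r₀ + r := by abel
      rwa [e] at this
    · intro s hss hmem
      apply hs s hss
      have := Q.sub_mem hmem hq
      have e : q - r₀ + s - q = s - r₀ := by abel
      rwa [e] at this

/-- Existence with only order and non-membership constraints. -/
lemma ex_free (hQproper : (Q : Set M) ≠ Set.univ) (hQdense : ∀ a b : M, a < b → ∃ q ∈ Q, a < q ∧ q < b) (one : M) (hone : 0 < one) (ls us ss : List M) :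
    (∃ y, (∀ l ∈ ls, l < y) ∧ (∀ u ∈ us, y < u) ∧ (∀ s ∈ ss, y + s ∉ Q)) ↔
    (∀ l ∈ ls, ∀ u ∈ us, l < u) := by
  constructor
  · rintro ⟨y, hl, hu, _⟩
    exact fun l hls u hus => (hl l hls).trans (hu u hus)
  · intro hlu
    obtain ⟨a, b, hab, hla, hbu⟩ := interval_of_pairwise one hone ls us hlu
    obtain ⟨y, hy1, hy2, hy3⟩ := avoid Q hQproper hQdense hab ss
    exact ⟨y, fun l hls => lt_of_le_of_lt (hla l hls) hy1,
      fun u hus => lt_of_lt_of_le hy2 (hbu u hus), hy3⟩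

end QLemmas

end QEaux

namespace QEaux

variable {F M : Type} [Field F] [LinearOrder F] [IsStrictOrderedRing F] [AddCommGroup M] [LinearOrder M] [IsOrderedAddMonoid M] [Module F M]

/-- Affine function data: coefficients and constant. -/
abbrev QAff (F M : Type) (N : ℕ) := (Fin N → F) × M

def qaEval {N : ℕ} (t : QAff F M N) (x : Fin N → M) : M := (∑ i, t.1 i • x i) + t.2

def qaSub {N : ℕ} (t s : QAff F M N) : QAff F M N := (t.1 - s.1, t.2 - s.2)

def qaNeg {N : ℕ} (t : QAff F M N) : QAff F M N := (-t.1, -t.2)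

def qaAdd {N : ℕ} (t s : QAff F M N) : QAff F M N := (t.1 + s.1, t.2 + s.2)

def qaSmul {N : ℕ} (c : F) (t : QAff F M N) : QAff F M N := (fun i => c * t.1 i, c • t.2)

lemma qaEval_sub {N : ℕ} (t s : QAff F M N) (x : Fin N → M) :
    qaEval (qaSub t s) x = qaEval t x - qaEval s x := by
  simp only [qaEval, qaSub, Pi.sub_apply, sub_smul, Finset.sum_sub_distrib]
  abel

lemma qaEval_add {N : ℕ} (t s : QAff F M N) (x : Fin N → M) :
    qaEval (qaAdd t s) x = qaEval t x + qaEval s x := by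
  simp only [qaEval, qaAdd, Pi.add_apply, add_smul, Finset.sum_add_distrib]
  abel

lemma qaEval_neg {N : ℕ} (t : QAff F M N) (x : Fin N → M) :
    qaEval (qaNeg t) x = -qaEval t x := by
  simp only [qaEval, qaNeg, Pi.neg_apply, neg_smul, Finset.sum_neg_distrib, neg_add]

lemma qaEval_smul {N : ℕ} (c : F) (t : QAff F M N) (x : Fin N → M) :
    qaEval (qaSmul c t) x = c • qaEval t x := by
  simp only [qaEval, qaSmul, smul_add, Finset.smul_sum, mul_smul]

/-- Kinds of literals. -/
inductive QKind : Type
  | eq | pos | inq | ninq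

instance : Inhabited QKind := ⟨QKind.eq⟩
instance : Nonempty QKind := ⟨QKind.eq⟩

/-- A literal: an affine function together with a kind. -/
abbrev QLit (F M : Type) (N : ℕ) := QAff F M N × QKind

instance {N : ℕ} : Nonempty (QAff F M N) := ⟨(fun _ => 0, 0)⟩
instance {N : ℕ} : Nonempty (QLit F M N) := ⟨((fun _ => 0, 0), QKind.eq)⟩

def qlSet (Q : Set M) {N : ℕ} (l : QLit F M N) : Set (Fin N → M) :=
  match l.2 with
  | QKind.eq => {x | qaEval l.1 x = 0}
  | QKind.pos => {x | 0 < qaEval l.1 x}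
  | QKind.inq => {x | qaEval l.1 x ∈ Q}
  | QKind.ninq => {x | qaEval l.1 x ∉ Q}

def qcSet (Q : Set M) {N : ℕ} (L : List (QLit F M N)) : Set (Fin N → M) :=
  {x | ∀ l ∈ L, x ∈ qlSet Q l}

def qdSet (Q : Set M) {N : ℕ} (D : List (List (QLit F M N))) : Set (Fin N → M) :=
  {x | ∃ L ∈ D, x ∈ qcSet Q L}

lemma qcSet_append (Q : Set M) {N : ℕ} (A B : List (QLit F M N)) :
    qcSet Q (A ++ B) = qcSet Q A ∩ qcSet Q B := by
  ext x
  simp [qcSet, List.mem_append, or_imp, forall_and]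

lemma qdSet_nil (Q : Set M) {N : ℕ} : qdSet Q ([] : List (List (QLit F M N))) = ∅ := by
  simp [qdSet]

lemma qdSet_cons (Q : Set M) {N : ℕ} (L : List (QLit F M N)) (D : List (List (QLit F M N))) :
    qdSet Q (L :: D) = qcSet Q L ∪ qdSet Q D := by
  ext x
  simp [qdSet, List.mem_cons, or_and_right, exists_or]

lemma qdSet_inter (Q : Set M) {N : ℕ} (D₁ D₂ : List (List (QLit F M N))) :
    qdSet Q D₁ ∩ qdSet Q D₂ =
      qdSet Q (D₁.flatMap fun L₁ => D₂.map fun L₂ => L₁ ++ L₂) := by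
  ext x
  simp only [Set.mem_inter_iff, qdSet, Set.mem_setOf_eq, List.mem_flatMap, List.mem_map]
  constructor
  · rintro ⟨⟨L₁, h₁, hx₁⟩, ⟨L₂, h₂, hx₂⟩⟩
    refine ⟨L₁ ++ L₂, ⟨L₁, h₁, L₂, h₂, rfl⟩, ?_⟩
    rw [qcSet_append]
    exact ⟨hx₁, hx₂⟩
  · rintro ⟨L, ⟨L₁, h₁, L₂, h₂, rfl⟩, hx⟩
    rw [qcSet_append] at hx
    exact ⟨⟨L₁, h₁, hx.1⟩, ⟨L₂, h₂, hx.2⟩⟩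

lemma qdSet_single (Q : Set M) {N : ℕ} (l : QLit F M N) (x : Fin N → M) :
    x ∈ qdSet Q ((l :: []) :: []) ↔ x ∈ qlSet Q l := by
  constructor
  · rintro ⟨L, hL, h⟩
    have hLl : L = l :: [] := by simpa using hL
    subst hLl
    exact h l (by simp)
  · intro h
    refine ⟨l :: [], by simp, ?_⟩
    intro l' hl'
    have : l' = l := by simpa using hl'
    subst this
    exact h

/-- Negation of a literal, as a list (disjunction) of literals. -/
def qlNeg {N : ℕ} (l : QLit F M N) : List (QLit F M N) :=
  match l.2 with
  | QKind.eq => [(l.1, QKind.pos), (qaNeg l.1, QKind.pos)]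
  | QKind.pos => [(qaNeg l.1, QKind.pos), (l.1, QKind.eq)]
  | QKind.inq => [(l.1, QKind.ninq)]
  | QKind.ninq => [(l.1, QKind.inq)]

lemma qlNeg_spec (Q : Set M) {N : ℕ} (l : QLit F M N) (x : Fin N → M) :
    x ∉ qlSet Q l ↔ ∃ l' ∈ qlNeg l, x ∈ qlSet Q l' := by
  obtain ⟨t, k⟩ := l
  cases k with
  | eq =>
    constructor
    · intro h
      have h' : qaEval t x ≠ 0 := h
      rcases h'.lt_or_gt with h2 | h2
      · exact ⟨(qaNeg t, QKind.pos), by simp [qlNeg],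
          by simp only [qlSet, Set.mem_setOf_eq, qaEval_neg]; exact neg_pos.mpr h2⟩
      · exact ⟨(t, QKind.pos), by simp [qlNeg], h2⟩
    · rintro ⟨l', hl', hx⟩
      simp only [qlNeg, List.mem_cons, List.not_mem_nil, or_false] at hl'
      rcases hl' with rfl | rfl
      · exact ne_of_gt hx
      · have h2 : 0 < -qaEval t x := by
          simpa only [qlSet, Set.mem_setOf_eq, qaEval_neg] using hx
        exact ne_of_lt (neg_pos.mp h2)
  | pos =>
    constructor
    · intro h
      have h' : qaEval t x ≤ 0 := not_lt.mp h
      rcases h'.lt_or_eq with h2 | h2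
      · exact ⟨(qaNeg t, QKind.pos), by simp [qlNeg],
          by simp only [qlSet, Set.mem_setOf_eq, qaEval_neg]; exact neg_pos.mpr h2⟩
      · exact ⟨(t, QKind.eq), by simp [qlNeg], h2⟩
    · rintro ⟨l', hl', hx⟩
      simp only [qlNeg, List.mem_cons, List.not_mem_nil, or_false] at hl'
      rcases hl' with rfl | rfl
      · have h2 : 0 < -qaEval t x := by
          simpa only [qlSet, Set.mem_setOf_eq, qaEval_neg] using hx
        exact not_lt.mpr (le_of_lt (neg_pos.mp h2))
      · have h2 : qaEval t x = 0 := hx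
        exact not_lt.mpr (le_of_eq h2)
  | inq => simp [qlSet, qlNeg]
  | ninq => simp [qlSet, qlNeg]

lemma qcSet_compl (Q : Set M) {N : ℕ} (L : List (QLit F M N)) :
    (qcSet Q L)ᶜ = qdSet Q (L.flatMap fun l => (qlNeg l).map fun l' => [l']) := by
  ext x
  simp only [Set.mem_compl_iff, qcSet, qdSet, Set.mem_setOf_eq, List.mem_flatMap, List.mem_map,
    not_forall]
  constructor
  · rintro ⟨l, hl, hx⟩
    obtain ⟨l', hl', hx'⟩ := (qlNeg_spec Q l x).mp hx
    exact ⟨[l'], ⟨l, hl, l', hl', rfl⟩, by simpa [qcSet] using hx'⟩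
  · rintro ⟨L', ⟨l, hl, l', hl', rfl⟩, hx⟩
    refine ⟨l, hl, ?_⟩
    rw [qlNeg_spec Q l x]
    exact ⟨l', hl', by simpa [qcSet] using hx⟩

lemma qdSet_compl (Q : Set M) {N : ℕ} (D : List (List (QLit F M N))) :
    ∃ D' : List (List (QLit F M N)), (qdSet Q D)ᶜ = qdSet Q D' := by
  induction D with
  | nil =>
    refine ⟨([] : List (QLit F M N)) :: [], ?_⟩
    rw [qdSet_nil, Set.compl_empty]
    ext x; simp [qdSet, qcSet]
  | cons L D ih =>
    obtain ⟨D', hD'⟩ := ih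
    refine ⟨(L.flatMap fun l => (qlNeg l).map fun l' => [l']).flatMap
      fun L₁ => D'.map fun L₂ => L₁ ++ L₂, ?_⟩
    rw [qdSet_cons, Set.compl_union, hD', qcSet_compl, qdSet_inter]

end QEaux

namespace QEaux

variable {F M : Type} [Field F] [LinearOrder F] [IsStrictOrderedRing F] [AddCommGroup M] [LinearOrder M] [IsOrderedAddMonoid M] [Module F M]

section Key

variable {α : F} {e y : M}

lemma key_eq (hα : α ≠ 0) : e + α • y = 0 ↔ y = (-α⁻¹) • e := by
  constructor
  · intro h
    have h2 : α • y = -e := eq_neg_of_add_eq_zero_right h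
    rw [smul_cancel_iff hα] at h2
    rw [h2, smul_neg, neg_smul]
  · intro h
    rw [h, smul_smul, mul_neg, mul_inv_cancel₀ hα, neg_one_smul, add_neg_cancel]

lemma key_pos (hsmul : ∀ (c : F) (x : M), 0 < c → 0 < x → 0 < c • x)
    (hα : 0 < α) : 0 < e + α • y ↔ (-α⁻¹) • e < y := by
  have h1 : ((-α⁻¹) • e < y) ↔ (α • ((-α⁻¹) • e) < α • y) :=
    (smul_lt_smul_iff hsmul α hα).symm
  have h2 : α • ((-α⁻¹) • e) = -e := by
    rw [smul_smul, mul_neg, mul_inv_cancel₀ hα.ne', neg_one_smul]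
  rw [h1, h2, neg_lt_iff_pos_add, add_comm (α • y) e]

lemma key_neg (hsmul : ∀ (c : F) (x : M), 0 < c → 0 < x → 0 < c • x)
    (hα : α < 0) : 0 < e + α • y ↔ y < (-α⁻¹) • e := by
  have hβ : 0 < -α := neg_pos.mpr hα
  have h1 : (y < (-α⁻¹) • e) ↔ ((-α) • y < (-α) • ((-α⁻¹) • e)) :=
    (smul_lt_smul_iff hsmul (-α) hβ).symm
  have h2 : (-α) • ((-α⁻¹) • e) = e := by
    rw [smul_smul, neg_mul_neg, mul_inv_cancel₀ (ne_of_lt hα), one_smul]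
  rw [h1, h2]
  constructor
  · intro h
    refine sub_pos.mp ?_
    rw [neg_smul, sub_neg_eq_add]
    exact h
  · intro h
    have h4 : 0 < e - (-α) • y := sub_pos.mpr h
    rwa [neg_smul, sub_neg_eq_add] at h4

lemma key_q (Q : Submodule F M) (hα : α ≠ 0) :
    e + α • y ∈ Q ↔ y + α⁻¹ • e ∈ Q := by
  have h2 : α • (y + α⁻¹ • e) = e + α • y := by
    rw [smul_add, smul_inv_smul₀ hα, add_comm]
  rw [← h2, mem_smul_iff Q hα]

end Key

/-- Classified constraints on the last variable `y`:
`zs` are constraints not involving `y`; the rest give `y = e`, `l < y`, `y < u`,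
`y + r ∈ Q`, `y + s ∉ Q` respectively. -/
structure QCls (F M : Type) (N : ℕ) where
  zs : List (QLit F M N)
  es : List (QAff F M N)
  ls : List (QAff F M N)
  us : List (QAff F M N)
  rs : List (QAff F M N)
  ss : List (QAff F M N)

def qRestrict {N : ℕ} (t : QAff F M (N + 1)) : QAff F M N :=
  (fun i => t.1 i.castSucc, t.2)

def qCoef {N : ℕ} (t : QAff F M (N + 1)) : F := t.1 (Fin.last N)

lemma qaEval_snoc {N : ℕ} (t : QAff F M (N + 1)) (x : Fin N → M) (y : M) :
    qaEval t (Fin.snoc x y) = qaEval (qRestrict t) x + qCoef t • y := by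
  simp only [qaEval, qRestrict, qCoef, Fin.sum_univ_castSucc, Fin.snoc_castSucc, Fin.snoc_last]
  abel

def qInsert {N : ℕ} (l : QLit F M (N + 1)) (C : QCls F M N) : QCls F M N :=
  match l.2 with
  | QKind.eq =>
    if qCoef l.1 = 0 then {C with zs := (qRestrict l.1, QKind.eq) :: C.zs}
    else {C with es := qaSmul (-(qCoef l.1)⁻¹) (qRestrict l.1) :: C.es}
  | QKind.pos =>
    if 0 < qCoef l.1 then {C with ls := qaSmul (-(qCoef l.1)⁻¹) (qRestrict l.1) :: C.ls}
    else if qCoef l.1 < 0 then {C with us := qaSmul (-(qCoef l.1)⁻¹) (qRestrict l.1) :: C.us}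
    else {C with zs := (qRestrict l.1, QKind.pos) :: C.zs}
  | QKind.inq =>
    if qCoef l.1 = 0 then {C with zs := (qRestrict l.1, QKind.inq) :: C.zs}
    else {C with rs := qaSmul (qCoef l.1)⁻¹ (qRestrict l.1) :: C.rs}
  | QKind.ninq =>
    if qCoef l.1 = 0 then {C with zs := (qRestrict l.1, QKind.ninq) :: C.zs}
    else {C with ss := qaSmul (qCoef l.1)⁻¹ (qRestrict l.1) :: C.ss}

def qClassify {N : ℕ} : List (QLit F M (N + 1)) → QCls F M N
  | [] => ⟨[], [], [], [], [], []⟩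
  | l :: L => qInsert l (qClassify L)

def qClsSem (Q : Set M) {N : ℕ} (C : QCls F M N) (x : Fin N → M) (y : M) : Prop :=
  x ∈ qcSet Q C.zs ∧ (∀ t ∈ C.es, y = qaEval t x) ∧ (∀ t ∈ C.ls, qaEval t x < y) ∧
  (∀ t ∈ C.us, y < qaEval t x) ∧ (∀ t ∈ C.rs, y + qaEval t x ∈ Q) ∧
  (∀ t ∈ C.ss, y + qaEval t x ∉ Q)

lemma qClsSem_insert (hsmul : ∀ (c : F) (x : M), 0 < c → 0 < x → 0 < c • x)
    (Q : Submodule F M) {N : ℕ} (l : QLit F M (N + 1)) (C : QCls F M N)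
    (x : Fin N → M) (y : M) :
    qClsSem (Q : Set M) (qInsert l C) x y ↔
      (Fin.snoc x y ∈ qlSet (Q : Set M) l ∧ qClsSem (Q : Set M) C x y) := by
  obtain ⟨t, k⟩ := l
  have he : qaEval t (Fin.snoc x y) = qaEval (qRestrict t) x + qCoef t • y := qaEval_snoc t x y
  cases k with
  | eq =>
    by_cases hα : qCoef t = 0
    · simp only [qInsert, if_pos hα]
      simp only [qClsSem, qlSet, Set.mem_setOf_eq, qcSet, List.forall_mem_cons, he, hα,
        zero_smul, add_zero]
      tauto
    · simp only [qInsert, if_neg hα]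
      simp only [qClsSem, qlSet, Set.mem_setOf_eq, List.forall_mem_cons, he,
        key_eq hα, qaEval_smul]
      tauto
  | pos =>
    rcases lt_trichotomy (qCoef t) 0 with hα | hα | hα
    · simp only [qInsert, if_neg (not_lt.mpr hα.le), if_pos hα]
      simp only [qClsSem, qlSet, Set.mem_setOf_eq, List.forall_mem_cons, he,
        key_neg hsmul hα, qaEval_smul]
      tauto
    · simp only [qInsert, hα, lt_self_iff_false, if_false]
      simp only [qClsSem, qlSet, Set.mem_setOf_eq, qcSet, List.forall_mem_cons, he, hα,
        zero_smul, add_zero]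
      tauto
    · simp only [qInsert, if_pos hα]
      simp only [qClsSem, qlSet, Set.mem_setOf_eq, List.forall_mem_cons, he,
        key_pos hsmul hα, qaEval_smul]
      tauto
  | inq =>
    by_cases hα : qCoef t = 0
    · simp only [qInsert, if_pos hα]
      simp only [qClsSem, qlSet, Set.mem_setOf_eq, qcSet, List.forall_mem_cons, he, hα,
        zero_smul, add_zero]
      tauto
    · simp only [qInsert, if_neg hα]
      simp only [qClsSem, qlSet, Set.mem_setOf_eq, SetLike.mem_coe, List.forall_mem_cons, he,
        key_q Q hα, qaEval_smul]
      tauto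
  | ninq =>
    by_cases hα : qCoef t = 0
    · simp only [qInsert, if_pos hα]
      simp only [qClsSem, qlSet, Set.mem_setOf_eq, qcSet, List.forall_mem_cons, he, hα,
        zero_smul, add_zero]
      tauto
    · simp only [qInsert, if_neg hα]
      simp only [qClsSem, qlSet, Set.mem_setOf_eq, SetLike.mem_coe, List.forall_mem_cons, he,
        key_q Q hα, qaEval_smul]
      tauto

lemma qClassify_sem (hsmul : ∀ (c : F) (x : M), 0 < c → 0 < x → 0 < c • x)
    (Q : Submodule F M) {N : ℕ} (L : List (QLit F M (N + 1))) (x : Fin N → M) (y : M) :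
    Fin.snoc x y ∈ qcSet (Q : Set M) L ↔ qClsSem (Q : Set M) (qClassify L) x y := by
  induction L with
  | nil => simp [qcSet, qClassify, qClsSem]
  | cons l L ih =>
    have h1 : Fin.snoc x y ∈ qcSet (Q : Set M) (l :: L) ↔
        (Fin.snoc x y ∈ qlSet (Q : Set M) l ∧ Fin.snoc x y ∈ qcSet (Q : Set M) L) := by
      simp [qcSet]
    rw [h1, ih, qClassify, qClsSem_insert hsmul]

end QEaux

namespace QEaux

variable {F M : Type} [Field F] [LinearOrder F] [IsStrictOrderedRing F] [AddCommGroup M] [LinearOrder M] [IsOrderedAddMonoid M] [Module F M]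

/-- The quantifier-free projection of a classified conjunction. -/
def qProj {N : ℕ} (C : QCls F M N) : List (QLit F M N) :=
  match C.es, C.rs with
  | E₀ :: _, _ =>
      C.zs ++ C.es.map (fun E => (qaSub E₀ E, QKind.eq))
        ++ C.ls.map (fun l => (qaSub E₀ l, QKind.pos))
        ++ C.us.map (fun u => (qaSub u E₀, QKind.pos))
        ++ C.rs.map (fun r => (qaAdd E₀ r, QKind.inq))
        ++ C.ss.map (fun s => (qaAdd E₀ s, QKind.ninq))
  | [], r₀ :: _ =>
      C.zs ++ (C.ls.flatMap fun l => C.us.map fun u => (qaSub u l, QKind.pos))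
        ++ C.rs.map (fun r => (qaSub r r₀, QKind.inq))
        ++ C.ss.map (fun s => (qaSub s r₀, QKind.ninq))
  | [], [] =>
      C.zs ++ (C.ls.flatMap fun l => C.us.map fun u => (qaSub u l, QKind.pos))

lemma qcSet_map_mem (Q : Set M) {N : ℕ} {β : Type} (f : β → QLit F M N) (l : List β)
    (x : Fin N → M) : x ∈ qcSet Q (l.map f) ↔ ∀ t ∈ l, x ∈ qlSet Q (f t) := by
  simp [qcSet]

lemma qcSet_flat (Q : Set M) {N : ℕ} (ls us : List (QAff F M N)) (x : Fin N → M) :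
    x ∈ qcSet Q (ls.flatMap fun l => us.map fun u => (qaSub u l, QKind.pos)) ↔
      ∀ l ∈ ls, ∀ u ∈ us, qaEval l x < qaEval u x := by
  simp only [qcSet, Set.mem_setOf_eq, List.mem_flatMap, List.mem_map]
  constructor
  · intro h l hl u hu
    have := h (qaSub u l, QKind.pos) ⟨l, hl, u, hu, rfl⟩
    simp only [qlSet, Set.mem_setOf_eq, qaEval_sub] at this
    exact sub_pos.mp this
  · rintro h lit ⟨l, hl, u, hu, rfl⟩
    simp only [qlSet, Set.mem_setOf_eq, qaEval_sub]
    exact sub_pos.mpr (h l hl u hu)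

lemma qProj_spec (hsmul : ∀ (c : F) (x : M), 0 < c → 0 < x → 0 < c • x)
    (Q : Submodule F M) (hQproper : (Q : Set M) ≠ Set.univ)
    (hQdense : ∀ a b : M, a < b → ∃ q ∈ Q, a < q ∧ q < b)
    (one : M) (hone : 0 < one) {N : ℕ} (C : QCls F M N) (x : Fin N → M) :
    (∃ y, qClsSem (Q : Set M) C x y) ↔ x ∈ qcSet (Q : Set M) (qProj C) := by
  obtain ⟨zs, es, ls, us, rs, ss⟩ := C
  cases es with
  | cons E₀ es =>
    have hdecomp : x ∈ qcSet (Q : Set M)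
        (qProj (⟨zs, E₀ :: es, ls, us, rs, ss⟩ : QCls F M N)) ↔
        (x ∈ qcSet (Q : Set M) zs ∧ (∀ E ∈ E₀ :: es, qaEval E₀ x = qaEval E x) ∧
          (∀ l ∈ ls, qaEval l x < qaEval E₀ x) ∧ (∀ u ∈ us, qaEval E₀ x < qaEval u x) ∧
          (∀ r ∈ rs, qaEval E₀ x + qaEval r x ∈ Q) ∧
          (∀ s ∈ ss, qaEval E₀ x + qaEval s x ∉ Q)) := by
      simp only [qProj, qcSet_append, Set.mem_inter_iff, qcSet_map_mem, qlSet,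
        Set.mem_setOf_eq, qaEval_sub, qaEval_add, sub_eq_zero, sub_pos, SetLike.mem_coe,
        and_assoc]
    rw [hdecomp]
    constructor
    · rintro ⟨y, hz, heq, hl, hu, hr, hs⟩
      have hy : y = qaEval E₀ x := heq E₀ List.mem_cons_self
      subst hy
      exact ⟨hz, fun E hE => heq E hE, hl, hu, hr, hs⟩
    · rintro ⟨hz, heq, hl, hu, hr, hs⟩
      refine ⟨qaEval E₀ x, hz, ?_, hl, hu, hr, hs⟩
      intro E hE
      exact heq E hE
  | nil =>
    cases rs with
    | cons r₀ rs =>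
      have hdecomp : x ∈ qcSet (Q : Set M)
          (qProj (⟨zs, [], ls, us, r₀ :: rs, ss⟩ : QCls F M N)) ↔
          (x ∈ qcSet (Q : Set M) zs ∧ (∀ l ∈ ls, ∀ u ∈ us, qaEval l x < qaEval u x) ∧
            (∀ r ∈ r₀ :: rs, qaEval r x - qaEval r₀ x ∈ Q) ∧
            (∀ s ∈ ss, qaEval s x - qaEval r₀ x ∉ Q)) := by
        simp only [qProj, qcSet_append, Set.mem_inter_iff, qcSet_map_mem, qlSet,
          Set.mem_setOf_eq, qaEval_sub, SetLike.mem_coe, and_assoc, qcSet_flat]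
      rw [hdecomp]
      have hex := ex_q Q hQdense one hone (qaEval r₀ x)
        (rs.map fun t => qaEval t x) (ls.map fun t => qaEval t x)
        (us.map fun t => qaEval t x) (ss.map fun t => qaEval t x)
      simp only [List.forall_mem_cons, List.forall_mem_map] at hex
      simp only [qClsSem, List.forall_mem_cons]
      constructor
      · rintro ⟨y, hz, -, hl, hu, ⟨hr0, hr⟩, hs⟩
        have hmid := hex.mp ⟨y, hl, hu, ⟨hr0, hr⟩, hs⟩
        exact ⟨hz, hmid.1, hmid.2.1, hmid.2.2⟩
      · rintro ⟨hz, h1, h2, h3⟩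
        obtain ⟨y, hl, hu, hr, hs⟩ := hex.mpr ⟨h1, h2, h3⟩
        exact ⟨y, hz, by simp, hl, hu, hr, hs⟩
    | nil =>
      have hdecomp : x ∈ qcSet (Q : Set M)
          (qProj (⟨zs, [], ls, us, [], ss⟩ : QCls F M N)) ↔
          (x ∈ qcSet (Q : Set M) zs ∧ (∀ l ∈ ls, ∀ u ∈ us, qaEval l x < qaEval u x)) := by
        simp only [qProj, qcSet_append, Set.mem_inter_iff, qcSet_flat, and_assoc]
      rw [hdecomp]
      have hex := ex_free Q hQproper hQdense one hone
        (ls.map fun t => qaEval t x) (us.map fun t => qaEval t x) (ss.map fun t => qaEval t x)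
      simp only [List.forall_mem_map] at hex
      constructor
      · rintro ⟨y, hz, _, hl, hu, _, hs⟩
        exact ⟨hz, hex.mp ⟨y, hl, hu, hs⟩⟩
      · rintro ⟨hz, h1⟩
        obtain ⟨y, hl, hu, hs⟩ := hex.mpr h1
        exact ⟨y, hz, by simp, hl, hu, by simp, hs⟩

lemma qd_proj (hsmul : ∀ (c : F) (x : M), 0 < c → 0 < x → 0 < c • x)
    (Q : Submodule F M) (hQproper : (Q : Set M) ≠ Set.univ)
    (hQdense : ∀ a b : M, a < b → ∃ q ∈ Q, a < q ∧ q < b)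
    (one : M) (hone : 0 < one) {N : ℕ} (D : List (List (QLit F M (N + 1)))) :
    {x : Fin N → M | ∃ y, Fin.snoc x y ∈ qdSet (Q : Set M) D} =
      qdSet (Q : Set M) (D.map fun L => qProj (qClassify L)) := by
  ext x
  simp only [Set.mem_setOf_eq, qdSet, List.mem_map]
  constructor
  · rintro ⟨y, L, hL, hx⟩
    exact ⟨qProj (qClassify L), ⟨L, hL, rfl⟩,
      (qProj_spec hsmul Q hQproper hQdense one hone _ x).mp
        ⟨y, (qClassify_sem hsmul Q L x y).mp hx⟩⟩
  · rintro ⟨L', ⟨L, hL, rfl⟩, hx⟩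
    obtain ⟨y, hy⟩ := (qProj_spec hsmul Q hQproper hQdense one hone _ x).mpr hx
    exact ⟨y, L, hL, (qClassify_sem hsmul Q L x y).mpr hy⟩

end QEaux

namespace QEaux

variable {F M : Type} [Field F] [LinearOrder F] [IsStrictOrderedRing F] [AddCommGroup M] [LinearOrder M] [IsOrderedAddMonoid M] [Module F M]

/-- The family of basic sets from the theorem statement. -/
def qBasic (Q : Submodule F M) (N : ℕ) : Set (Set (Fin N → M)) :=
  {T : Set (Fin N → M) | ∃ (c : Fin N → F) (b : M),
      T = {x | (∑ i, c i • x i) + b = 0} ∨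
      T = {x | 0 < (∑ i, c i • x i) + b} ∨
      T = {x | (∑ i, c i • x i) + b ∈ Q}}

lemma ql_boolcomb (Q : Submodule F M) {N : ℕ} (l : QLit F M N) :
    BoolComb (qBasic Q N) (qlSet (Q : Set M) l) := by
  obtain ⟨t, k⟩ := l
  cases k with
  | eq => exact BoolComb.basic ⟨t.1, t.2, Or.inl rfl⟩
  | pos => exact BoolComb.basic ⟨t.1, t.2, Or.inr (Or.inl rfl)⟩
  | inq => exact BoolComb.basic ⟨t.1, t.2, Or.inr (Or.inr rfl)⟩
  | ninq =>
    have h : qlSet (Q : Set M) (t, QKind.ninq) =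
        ({x : Fin N → M | (∑ i, t.1 i • x i) + t.2 ∈ Q})ᶜ := rfl
    rw [h]
    exact BoolComb.compl (BoolComb.basic ⟨t.1, t.2, Or.inr (Or.inr rfl)⟩)

lemma qc_boolcomb (Q : Submodule F M) {N : ℕ} (L : List (QLit F M N)) :
    BoolComb (qBasic Q N) (qcSet (Q : Set M) L) := by
  induction L with
  | nil =>
    have h : qcSet (Q : Set M) ([] : List (QLit F M N)) = Set.univ := by
      ext x; simp [qcSet]
    rw [h]; exact BoolComb.univ
  | cons l L ih =>
    have h : qcSet (Q : Set M) (l :: L) = qlSet (Q : Set M) l ∩ qcSet (Q : Set M) L := by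
      ext x; simp [qcSet]
    rw [h]
    exact BoolComb.inter (ql_boolcomb Q l) ih

lemma qd_boolcomb (Q : Submodule F M) {N : ℕ} (D : List (List (QLit F M N))) :
    BoolComb (qBasic Q N) (qdSet (Q : Set M) D) := by
  induction D with
  | nil =>
    rw [qdSet_nil, ← Set.compl_univ]
    exact BoolComb.compl BoolComb.univ
  | cons L D ih =>
    rw [qdSet_cons, Set.union_eq_compl_compl_inter_compl]
    exact BoolComb.compl
      (BoolComb.inter (BoolComb.compl (qc_boolcomb Q L)) (BoolComb.compl ih))

end QEaux

namespace QEaux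

variable {F M : Type} [Field F] [LinearOrder F] [IsStrictOrderedRing F] [AddCommGroup M] [LinearOrder M] [IsOrderedAddMonoid M] [Module F M]

/-- Every term of the language denotes an affine function. -/
lemma term_affine (one : M) (QS : Set M) {N : ℕ}
    (t : ((LP F)[[↥(Set.univ : Set M)]]).Term (Fin N)) :
    letI := LPStruc F M one QS
    ∃ p : QAff F M N, ∀ x : Fin N → M, t.realize x = qaEval p x := by
  letI := LPStruc F M one QS
  induction t with
  | var i =>
    refine ⟨(fun j => if j = i then 1 else 0, 0), fun x => ?_⟩
    simp only [Term.realize_var, qaEval]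
    have h1 : ∀ j : Fin N, (if j = i then (1 : F) else 0) • x j =
        if j = i then x j else 0 := by
      intro j; split <;> simp
    rw [Finset.sum_congr rfl fun j _ => h1 j, Finset.sum_ite_eq' Finset.univ i x]
    simp
  | @func l f ts ih =>
    rcases f with f0 | c
    · cases f0 with
      | add =>
        obtain ⟨p₀, h₀⟩ := ih 0
        obtain ⟨p₁, h₁⟩ := ih 1
        refine ⟨qaAdd p₀ p₁, fun x => ?_⟩
        have h : Term.realize x (Term.func (Sum.inl LPFunc.add) ts) =
            Term.realize x (ts 0) + Term.realize x (ts 1) := by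
          rfl
        refine h.trans ?_; rw [h₀, h₁, qaEval_add]
      | neg =>
        obtain ⟨p₀, h₀⟩ := ih 0
        refine ⟨qaNeg p₀, fun x => ?_⟩
        have h : Term.realize x (Term.func (Sum.inl LPFunc.neg) ts) =
            -Term.realize x (ts 0) := by
          rfl
        refine h.trans ?_; rw [h₀, qaEval_neg]
      | zero =>
        refine ⟨(fun _ => (0 : F), 0), fun x => ?_⟩
        have h : Term.realize x (Term.func (Sum.inl LPFunc.zero) ts) = (0 : M) := by
          rfl
        refine h.trans ?_; simp [qaEval]
      | one =>
        refine ⟨(fun _ => (0 : F), one), fun x => ?_⟩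
        have h : Term.realize x (Term.func (Sum.inl LPFunc.one) ts) = one := by
          rfl
        refine h.trans ?_; simp [qaEval]
      | smul γ =>
        obtain ⟨p₀, h₀⟩ := ih 0
        refine ⟨qaSmul γ p₀, fun x => ?_⟩
        have h : Term.realize x (Term.func (Sum.inl (LPFunc.smul γ)) ts) =
            γ • Term.realize x (ts 0) := by
          rfl
        refine h.trans ?_; rw [h₀, qaEval_smul]
    · rcases l with _ | l
      · refine ⟨(fun _ => (0 : F), (c : M)), fun x => ?_⟩
        have h : Term.realize x (Term.func (Sum.inr c) ts) = (c : M) := by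
          rfl
        refine h.trans ?_; simp [qaEval]
      · exact c.elim

/-- Every definable set (in combined variables) is given by a DNF of literals. -/
lemma form_dnf (hsmul : ∀ (c : F) (x : M), 0 < c → 0 < x → 0 < c • x)
    (one : M) (hone : 0 < one) (Q : Submodule F M)
    (hQproper : (Q : Set M) ≠ Set.univ)
    (hQdense : ∀ a b : M, a < b → ∃ q ∈ Q, a < q ∧ q < b) {n : ℕ} :
    letI := LPStruc F M one (Q : Set M)
    ∀ (m : ℕ) (φ : ((LP F)[[↥(Set.univ : Set M)]]).BoundedFormula (Fin n) m),
      ∃ D : List (List (QLit F M (n + m))),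
        {z : Fin (n + m) → M |
          φ.Realize (fun i => z (Fin.castAdd m i)) (fun j => z (Fin.natAdd n j))} =
        qdSet (Q : Set M) D := by
  letI := LPStruc F M one (Q : Set M)
  intro m φ
  induction φ with
  | falsum =>
    refine ⟨[], ?_⟩
    ext z
    constructor
    · intro h
      exact h.elim
    · rintro ⟨L, hL, -⟩
      exact absurd hL (List.not_mem_nil)
  | @equal m t₁ t₂ =>
    obtain ⟨p₁, h₁⟩ := term_affine one (Q : Set M)
      (t₁.relabel (finSumFinEquiv (m := n) (n := m)))
    obtain ⟨p₂, h₂⟩ := term_affine one (Q : Set M)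
      (t₂.relabel (finSumFinEquiv (m := n) (n := m)))
    refine ⟨((qaSub p₁ p₂, QKind.eq) :: []) :: [], ?_⟩
    ext z
    have hv : (Sum.elim (fun i => z (Fin.castAdd m i)) fun j => z (Fin.natAdd n j)) =
        z ∘ ⇑(finSumFinEquiv (m := n) (n := m)) := by funext s; cases s <;> rfl
    have hre : ((BoundedFormula.equal t₁ t₂).Realize
        (fun i => z (Fin.castAdd m i)) (fun j => z (Fin.natAdd n j))) ↔
        (Term.realize (Sum.elim (fun i => z (Fin.castAdd m i)) fun j => z (Fin.natAdd n j)) t₁ =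
         Term.realize (Sum.elim (fun i => z (Fin.castAdd m i)) fun j => z (Fin.natAdd n j)) t₂) :=
      Iff.rfl
    rw [hv] at hre
    rw [← Term.realize_relabel, ← Term.realize_relabel, h₁, h₂] at hre
    simp only [Set.mem_setOf_eq]
    rw [hre, qdSet_single,
      show (z ∈ qlSet (Q : Set M) (qaSub p₁ p₂, QKind.eq)) = (qaEval (qaSub p₁ p₂) z = 0)
        from rfl, qaEval_sub, sub_eq_zero]
  | @rel m l R ts =>
    rcases R with r | r
    · cases r with
      | lt =>
        obtain ⟨p₀, h₀⟩ := term_affine one (Q : Set M)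
          ((ts 0).relabel (finSumFinEquiv (m := n) (n := m)))
        obtain ⟨p₁, h₁⟩ := term_affine one (Q : Set M)
          ((ts 1).relabel (finSumFinEquiv (m := n) (n := m)))
        refine ⟨((qaSub p₁ p₀, QKind.pos) :: []) :: [], ?_⟩
        ext z
        have hv : (Sum.elim (fun i => z (Fin.castAdd m i)) fun j => z (Fin.natAdd n j)) =
            z ∘ ⇑(finSumFinEquiv (m := n) (n := m)) := by funext s; cases s <;> rfl
        have hre : ((BoundedFormula.rel (Sum.inl LPRel.lt) ts).Realize
            (fun i => z (Fin.castAdd m i)) (fun j => z (Fin.natAdd n j))) ↔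
            (Term.realize (Sum.elim (fun i => z (Fin.castAdd m i)) fun j => z (Fin.natAdd n j)) (ts 0) <
             Term.realize (Sum.elim (fun i => z (Fin.castAdd m i)) fun j => z (Fin.natAdd n j)) (ts 1)) :=
          Iff.rfl
        rw [hv] at hre
        rw [← Term.realize_relabel, ← Term.realize_relabel, h₀, h₁] at hre
        simp only [Set.mem_setOf_eq]
        refine hre.trans ?_
        rw [qdSet_single,
          show (z ∈ qlSet (Q : Set M) (qaSub p₁ p₀, QKind.pos)) = (0 < qaEval (qaSub p₁ p₀) z)
            from rfl, qaEval_sub, sub_pos]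
      | q =>
        obtain ⟨p₀, h₀⟩ := term_affine one (Q : Set M)
          ((ts 0).relabel (finSumFinEquiv (m := n) (n := m)))
        refine ⟨((p₀, QKind.inq) :: []) :: [], ?_⟩
        ext z
        have hv : (Sum.elim (fun i => z (Fin.castAdd m i)) fun j => z (Fin.natAdd n j)) =
            z ∘ ⇑(finSumFinEquiv (m := n) (n := m)) := by funext s; cases s <;> rfl
        have hre : ((BoundedFormula.rel (Sum.inl LPRel.q) ts).Realize
            (fun i => z (Fin.castAdd m i)) (fun j => z (Fin.natAdd n j))) ↔
            (Term.realize (Sum.elim (fun i => z (Fin.castAdd m i)) fun j => z (Fin.natAdd n j)) (ts 0) ∈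
              (Q : Set M)) :=
          Iff.rfl
        rw [hv] at hre
        rw [← Term.realize_relabel, h₀] at hre
        simp only [Set.mem_setOf_eq]
        refine hre.trans ?_
        rw [qdSet_single,
          show (z ∈ qlSet (Q : Set M) (p₀, QKind.inq)) = (qaEval p₀ z ∈ (Q : Set M)) from rfl]
    · exact r.elim
  | @imp m φ ψ ihφ ihψ =>
    obtain ⟨D₁, h₁⟩ := ihφ
    obtain ⟨D₂, h₂⟩ := ihψ
    obtain ⟨D₂', h₂'⟩ := qdSet_compl (Q : Set M) D₂
    obtain ⟨D₃, h₃⟩ := qdSet_compl (Q : Set M)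
      (D₁.flatMap fun L₁ => D₂'.map fun L₂ => L₁ ++ L₂)
    refine ⟨D₃, ?_⟩
    have hset : {z : Fin (n + m) → M | (φ.imp ψ).Realize
        (fun i => z (Fin.castAdd m i)) (fun j => z (Fin.natAdd n j))} =
        (qdSet (Q : Set M) D₁ ∩ (qdSet (Q : Set M) D₂)ᶜ)ᶜ := by
      rw [← h₁, ← h₂]
      ext z
      simp only [Set.mem_setOf_eq, BoundedFormula.realize_imp, Set.mem_compl_iff,
        Set.mem_inter_iff]
      tauto
    rw [hset, h₂', qdSet_inter, h₃]
  | @all m φ ih =>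
    obtain ⟨D, hD⟩ := ih
    obtain ⟨D', hD'⟩ := qdSet_compl (Q : Set M) D
    have hproj := qd_proj hsmul Q hQproper hQdense one hone (N := n + m) D'
    obtain ⟨D'', hD''⟩ := qdSet_compl (Q : Set M) (D'.map fun L => qProj (qClassify L))
    refine ⟨D'', ?_⟩
    ext z
    simp only [Set.mem_setOf_eq, BoundedFormula.realize_all]
    have hfix : ∀ y : M,
        (φ.Realize (fun i => z (Fin.castAdd m i))
          (Fin.snoc (fun j => z (Fin.natAdd n j)) y)) ↔
        Fin.snoc z y ∈ qdSet (Q : Set M) D := by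
      intro y
      have e1 : (fun i => (Fin.snoc z y : Fin (n + m + 1) → M) (Fin.castAdd (m + 1) i)) =
          fun i => z (Fin.castAdd m i) := by
        funext i
        have e : (Fin.castAdd (m + 1) i : Fin (n + m + 1)) =
            Fin.castSucc (Fin.castAdd m i) := by
          apply Fin.ext; rfl
        rw [e, Fin.snoc_castSucc]
      have e2 : (fun j => (Fin.snoc z y : Fin (n + m + 1) → M) (Fin.natAdd n j)) =
          Fin.snoc (fun j => z (Fin.natAdd n j)) y := by
        funext j
        refine Fin.lastCases ?_ ?_ j
        · have e : (Fin.natAdd n (Fin.last m) : Fin (n + m + 1)) = Fin.last (n + m) := by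
            apply Fin.ext; rfl
          rw [e, Fin.snoc_last, Fin.snoc_last]
        · intro j'
          have e : (Fin.natAdd n (Fin.castSucc j') : Fin (n + m + 1)) =
              Fin.castSucc (Fin.natAdd n j') := by
            apply Fin.ext; rfl
          rw [e, Fin.snoc_castSucc, Fin.snoc_castSucc]
      have h0 := Set.ext_iff.mp hD (Fin.snoc z y)
      simp only [Set.mem_setOf_eq] at h0
      rw [e1, e2] at h0
      exact h0
    have hz : z ∈ qdSet (Q : Set M) (D'.map fun L => qProj (qClassify L)) ↔
        ∃ y, Fin.snoc z y ∈ qdSet (Q : Set M) D' :=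
      (Set.ext_iff.mp hproj z).symm
    have hD''z := Set.ext_iff.mp hD'' z
    have hD'z := fun (y : M) => Set.ext_iff.mp hD' (Fin.snoc z y)
    constructor
    · intro h
      refine hD''z.mp (fun hc => ?_)
      obtain ⟨y, hy⟩ := hz.mp hc
      exact ((hD'z y).mpr hy) ((hfix y).mp (h y))
    · intro h y
      by_contra hcon
      have h1 : Fin.snoc z y ∈ (qdSet (Q : Set M) D)ᶜ :=
        fun hmem => hcon ((hfix y).mpr hmem)
      exact (hD''z.mpr h) (hz.mpr ⟨y, (hD'z y).mp h1⟩)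

end QEaux



/-- Every definable subset of `Mⁿ` is a finite Boolean combination of
sets of the forms `{x | t(x) = 0}`, `{x | t(x) > 0}` and `{x | t(x) ∈ Q}`, where
`t(x) = c₁•x₁ + ⋯ + cₙ•xₙ + b` ranges over affine functions. -/
theorem statement3
    (hsmul : ∀ (c : F) (x : M), 0 < c → 0 < x → 0 < c • x)
    (one : M) (hone : 0 < one)
    (Q : Submodule F M) (hQproper : (Q : Set M) ≠ Set.univ) (honeQ : one ∈ Q)
    (hQdense : ∀ a b : M, a < b → ∃ q ∈ Q, a < q ∧ q < b)
    (n : ℕ) (S : Set (Fin n → M)) (hS : POVSDefinable F M one (Q : Set M) S) :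
    BoolComb {T : Set (Fin n → M) | ∃ (c : Fin n → F) (b : M),
        T = {x | (∑ i, c i • x i) + b = 0} ∨
        T = {x | 0 < (∑ i, c i • x i) + b} ∨
        T = {x | (∑ i, c i • x i) + b ∈ Q}} S := by
    classical
  letI := LPStruc F M one (Q : Set M)
  obtain ⟨φ, hφ⟩ := hS
  obtain ⟨D, hD⟩ := QEaux.form_dnf hsmul one hone Q hQproper hQdense 0 φ
  have hSet : S = QEaux.qdSet (Q : Set M) D := by
    rw [hφ, ← hD]
    ext z
    simp only [Set.mem_setOf_eq]
    have e1 : (fun i : Fin n => z (Fin.castAdd 0 i)) = z :=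
      funext fun i => congrArg z (Fin.ext rfl)
    have e2 : (fun j : Fin 0 => z (Fin.natAdd n j)) = (default : Fin 0 → M) :=
      funext fun j => j.elim0
    constructor
    · intro h
      have h2 : BoundedFormula.Realize φ (fun i => z (Fin.castAdd 0 i))
          (fun j => z (Fin.natAdd n j)) := by
        rw [e1, e2]; exact h
      exact h2
    · intro h
      have h2 : BoundedFormula.Realize φ (fun i => z (Fin.castAdd 0 i))
          (fun j => z (Fin.natAdd n j)) := h
      rw [e1, e2] at h2
      exact h2
  rw [hSet]
  exact QEaux.qd_boolcomb Q D
end
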